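/- arXiv:1510.06984 — 4 statements merged into one kernel-verified Lean document; each statement's English description precedes it below -/
import Mathlib

section
/- Every Lyndon-Shirshov word fully partitions; that is, for every Lyndon-Shirshov word w over a totally ordered alphabet there is a sequence of simple partitions w ↠ ω₁ ↠ ⋯ ↠ ω_ℓ ending in the trivial one-block partition. -/
/-- A word `w` over a totally ordered alphabet is a Lyndon-Shirshov word if it is nonempty and
lexicographically strictly less than every word obtained from it by a nontrivial cyclic
permutation (moving a nonempty proper prefix to the end). -/
def IsLyndon {A : Type*} [LinearOrder A] (w : List A) : Prop :=
  w ≠ [] ∧ ∀ u v : List A, u ≠ [] → v ≠ [] → w = u ++ v → w < v ++ u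

/-- For a fixed letter `b`, a `b`-simple word is a word of the form `bⁿx` with `n ≥ 0` and
`x` a single letter different from `b`. -/
def IsSimpleWord {B : Type*} (b : B) (w : List B) : Prop :=
  ∃ (n : ℕ) (x : B), x ≠ b ∧ w = List.replicate n b ++ [x]

/-- One step of simple partitioning, at the level of words of blocks (blocks are recorded by
their underlying words): `ω ↠ ω\'` if `ω` can be written as a concatenation of subwords, each
of which is a `b`-simple word over the alphabet of blocks where `b` is the first block of
`ω`, and `ω\'` is the resulting word whose letters are the (flattened) combined blocks. -/
def PartStep {A : Type*} (ω ω' : List (List A)) : Prop :=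
  ∃ P : List (List (List A)),
    P.flatten = ω ∧ (∀ p ∈ P, IsSimpleWord ω.headI p) ∧ ω' = P.map List.flatten

namespace LyndonAux

open List

set_option linter.unusedVariables false
set_option linter.unusedSectionVars false

variable {A : Type*} [LinearOrder A] {B : Type*} [DecidableEq B]


open List


lemma lt_is_lex {s t : List A} (h : s < t) : List.Lex (· < ·) s t := h
lemma lex_is_lt {s t : List A} (h : List.Lex (· < ·) s t) : s < t := h

lemma lt_of_cons_lt_cons {a : A} {s t : List A} (h : a :: s < a :: t) : s < t := by
  cases lt_is_lex h with
  | cons h => exact h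
  | rel h => exact absurd h (lt_irrefl a)

lemma lt_of_append_lt_append_left : ∀ (l : List A) {s t : List A}, l ++ s < l ++ t → s < t
  | [], s, t, h => h
  | c :: l, s, t, h => lt_of_append_lt_append_left l (lt_of_cons_lt_cons h)

lemma append_lt_append_left {s t : List A} (l : List A) (h : s < t) : l ++ s < l ++ t :=
  lex_is_lt (List.Lex.append_left _ (lt_is_lex h) l)

lemma append_lt_append_of_lt_of_not_prefix {p : List A} :
    ∀ {q : List A}, p < q → ¬ p <+: q → ∀ s t : List A, p ++ s < q ++ t := by
  induction p with
  | nil => intro q h hpre; exact absurd (List.nil_prefix) hpre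
  | cons a p ih =>
      intro q h hpre s t
      cases q with
      | nil => exact absurd (lt_is_lex h) (by simp)
      | cons b q =>
          cases lt_is_lex h with
          | rel hab => exact lex_is_lt (List.Lex.rel hab)
          | cons h' =>
              have : ¬ p <+: q := fun hp => hpre (List.cons_prefix_cons.mpr ⟨rfl, hp⟩)
              exact lex_is_lt (List.Lex.cons (lt_is_lex (ih (lex_is_lt h') this s t)))

lemma lt_of_prefix_of_ne : ∀ {p q : List A}, p <+: q → p ≠ q → p < q := by
  intro p
  induction p with
  | nil =>
      intro q _ hne
      cases q with
      | nil => exact absurd rfl hne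
      | cons c q' => exact lex_is_lt List.Lex.nil
  | cons a p ih =>
      intro q hp hne
      cases q with
      | nil => have := hp.length_le; simp at this
      | cons b q' =>
          obtain ⟨rfl, h⟩ := List.cons_prefix_cons.mp hp
          exact lex_is_lt (List.Lex.cons (lt_is_lex (ih h (fun e => hne (by rw [e])))))

lemma lyndon_lt_suffix {w u v : List A} (hw : IsLyndon w) (hu : u ≠ []) (hv : v ≠ [])
    (he : w = u ++ v) : w < v := by
  by_contra hcon
  have hlen : v.length < w.length := by
    rw [he, List.length_append]
    have := List.length_pos_iff.mpr hu
    omega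
  have hvw : v < w := by
    rcases lt_or_eq_of_le (not_lt.mp hcon) with h | h
    · exact h
    · exact absurd (congrArg List.length h) (by omega)
  by_cases hp : v <+: w
  · obtain ⟨t, ht⟩ := hp
    have htn : t ≠ [] := by
      rintro rfl
      exact absurd (congrArg List.length ht) (by simp; omega)
    have h1 : w < t ++ v := hw.2 v t hv htn ht.symm
    have h2 : w < v ++ u := hw.2 u v hu hv he
    have htu : t < u := lt_of_append_lt_append_left v (ht ▸ h2)
    by_cases htp : t <+: u
    · have : t = u := htp.eq_of_length (by
        have l1 := congrArg List.length ht
        have l2 := congrArg List.length he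
        simp at l1 l2; omega)
      rw [this] at htu; exact absurd htu (lt_irrefl u)
    · have := append_lt_append_of_lt_of_not_prefix htu htp v v
      rw [he] at h1
      exact absurd h1 (asymm this)
  · have h2 : w < v ++ u := hw.2 u v hu hv he
    have := append_lt_append_of_lt_of_not_prefix hvw hp u []
    rw [List.append_nil] at this
    exact absurd h2 (asymm this)


set_option linter.unusedVariables false
set_option linter.unusedSectionVars false

/-- Greedy factorization of a word into `b`-simple pieces. -/
def factor (b : B) : List B → List (List B)
  | [] => []
  | x :: r =>
      if x = b then
        match factor b r with
        | [] => [[b]]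
        | p :: ps => (b :: p) :: ps
      else [x] :: factor b r

lemma factor_ne_nil (b : B) : ∀ {l : List B}, l ≠ [] → factor b l ≠ [] := by
  intro l hl
  cases l with
  | nil => exact absurd rfl hl
  | cons x r =>
      by_cases h : x = b
      · rcases hf : factor b r with _ | ⟨p, ps⟩ <;> simp [factor, h, hf]
      · simp [factor, h]

lemma flatten_factor (b : B) : ∀ (l : List B), (factor b l).flatten = l := by
  intro l
  induction l with
  | nil => rfl
  | cons x r ih =>
      by_cases h : x = b
      · subst h
        rcases hf : factor x r with _ | ⟨p, ps⟩
        · have : r = [] := by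
            by_contra hr
            exact factor_ne_nil x hr hf
          simp [factor, hf, this]
        · have h2 : p ++ ps.flatten = r := by
            have h3 := ih; rw [hf] at h3; simpa using h3
          simp only [factor, if_pos rfl, if_true, hf, flatten_cons, List.cons_append, h2]
      · simp [factor, h, ih]

lemma factor_simple (b : B) : ∀ (l : List B), (∀ l', l ≠ l' ++ [b]) →
    ∀ p ∈ factor b l, IsSimpleWord b p := by
  intro l
  induction l with
  | nil => intro _ p hp; simp [factor] at hp
  | cons x r ih =>
      intro hend p hp
      have hrend : ∀ l', r ≠ l' ++ [b] := by
        intro l' he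
        exact hend (x :: l') (by rw [he]; rfl)
      by_cases h : x = b
      · subst h
        rcases hf : factor x r with _ | ⟨q, qs⟩
        · have : r = [] := by
            by_contra hr
            exact factor_ne_nil x hr hf
          subst this
          exact absurd rfl (hend [])
        · simp only [factor, if_pos rfl, if_true, hf, List.mem_cons] at hp
          rcases hp with rfl | hp
          · obtain ⟨n, y, hy, hq⟩ := ih hrend q (by rw [hf]; simp)
            exact ⟨n + 1, y, hy, by simp [hq, List.replicate_succ]⟩
          · exact ih hrend p (by rw [hf]; simp [hp])
      · simp only [factor, if_neg h, List.mem_cons] at hp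
        rcases hp with rfl | hp
        · exact ⟨0, x, h, by simp⟩
        · exact ih hrend p hp

lemma simple_ne_nil {b : B} {p : List B} (h : IsSimpleWord b p) : p ≠ [] := by
  obtain ⟨n, x, _, rfl⟩ := h; simp

lemma length_le_length_flatten : ∀ {P : List (List B)}, (∀ p ∈ P, p ≠ []) →
    P.length ≤ P.flatten.length := by
  intro P
  induction P with
  | nil => simp
  | cons q Q ih =>
      intro h
      have hq : 0 < q.length := List.length_pos_iff.mpr (h q (by simp))
      have := ih (fun p hp => h p (by simp [hp]))
      simp only [flatten_cons, length_append, length_cons]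
      omega

/-- flattened combined block -/
def blkA (b : List A) (m : ℕ) (x : List A) : List A := (List.replicate m b).flatten ++ x

lemma blkA_zero (b x : List A) : blkA b 0 x = x := by simp [blkA]

lemma blkA_succ (b : List A) (m : ℕ) (x : List A) :
    blkA b (m + 1) x = b ++ blkA b m x := by
  simp [blkA, List.replicate_succ]

lemma flatten_simple {b x : List A} {m : ℕ} :
    (List.replicate m b ++ [x]).flatten = blkA b m x := by
  simp [blkA]

lemma prefix_of_append_prefix {x b z : List A} (h : x <+: b ++ z) : x <+: b ∨ b <+: x := by
  exact List.prefix_or_prefix_of_prefix h (List.prefix_append b z)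

lemma blkA_prefix {b : List A} (hb : b ≠ []) :
    ∀ (m : ℕ) {x : List A} (n : ℕ) {y : List A}, x ≠ [] →
    ((b <+: x ∨ x <+: b) → b = x) → ((b <+: y ∨ y <+: b) → b = y) →
    ((x <+: y ∨ y <+: x) → x = y) → x ≠ b → y ≠ b →
    blkA b m x <+: blkA b n y → m = n ∧ x = y := by
  intro m
  induction m with
  | zero =>
      intro x n y hx hbx hby hxy hxb hyb h
      cases n with
      | zero =>
          rw [blkA_zero, blkA_zero] at h
          exact ⟨rfl, hxy (Or.inl h)⟩
      | succ k =>
          rw [blkA_succ, blkA_zero] at h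
          rcases prefix_of_append_prefix h with h' | h'
          · exact absurd (hbx (Or.inr h')).symm hxb
          · exact absurd (hbx (Or.inl h')).symm hxb
  | succ k ih =>
      intro x n y hx hbx hby hxy hxb hyb h
      cases n with
      | zero =>
          rw [blkA_succ, blkA_zero] at h
          exact absurd (hby (Or.inl ((List.prefix_append b (blkA b k x)).trans h))).symm hyb
      | succ n' =>
          rw [blkA_succ, blkA_succ] at h
          have := ih n' hx hbx hby hxy hxb hyb ((List.prefix_append_right_inj b).mp h)
          exact ⟨by omega, this.2⟩



lemma master : ∀ (s t : List (List A)),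
    (∀ p ∈ s, p ≠ []) → (∀ p ∈ t, p ≠ []) →
    (∀ p ∈ s, ∀ q ∈ t, (p <+: q ∨ q <+: p) → p = q) →
    s < t → s.flatten < t.flatten := by
  intro s
  induction s with
  | nil =>
      intro t _ hne' _ h
      cases lt_is_lex h with
      | @nil q t' =>
          have hq : q ≠ [] := hne' q (by simp)
          obtain ⟨c, q', rfl⟩ := List.exists_cons_of_ne_nil hq
          exact lex_is_lt List.Lex.nil
  | cons p s' ih =>
      intro t hne hne' hpf h
      cases lt_is_lex h with
      | @rel _ _ q t' hpq =>
          have hnp : ¬ p <+: q := by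
            intro hp
            exact absurd (hpf p (by simp) q (by simp) (Or.inl hp)) (ne_of_lt (lex_is_lt hpq))
          simpa using append_lt_append_of_lt_of_not_prefix (lex_is_lt hpq) hnp s'.flatten t'.flatten
      | @cons _ _ t' h' =>
          have := ih t' (fun x hx => hne x (by simp [hx]))
            (fun x hx => hne' x (by simp [hx]))
            (fun x hx y hy => hpf x (by simp [hx]) y (by simp [hy])) (lex_is_lt h')
          simpa using append_lt_append_left p this

lemma lt_of_flatten_lt {s t : List (List A)}
    (hne : ∀ p ∈ s, p ≠ []) (hne' : ∀ p ∈ t, p ≠ [])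
    (hpf : ∀ p ∈ s, ∀ q ∈ t, (p <+: q ∨ q <+: p) → p = q)
    (h : s.flatten < t.flatten) : s < t := by
  rcases lt_trichotomy s t with h' | rfl | h'
  · exact h'
  · exact absurd h (lt_irrefl _)
  · have := master t s hne' hne (fun p hp q hq hor => (hpf q hq p hp hor.symm).symm) h'
    exact absurd h (asymm this)

lemma flatten_map_flatten : ∀ (P : List (List (List A))),
    (P.map List.flatten).flatten = P.flatten.flatten := by
  intro P
  induction P with
  | nil => rfl
  | cons p P ih => simp [flatten_append, ih]

lemma main : ∀ (N : ℕ) (ω : List (List A)), ω.length ≤ N → IsLyndon ω →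
    (∀ p ∈ ω, p ≠ []) → (∀ p ∈ ω, ∀ q ∈ ω, (p <+: q ∨ q <+: p) → p = q) →
    ∃ (ℓ : ℕ) (ωs : Fin (ℓ + 1) → List (List A)),
      ωs 0 = ω ∧ (∀ i : Fin ℓ, PartStep (ωs i.castSucc) (ωs i.succ)) ∧
      ωs (Fin.last ℓ) = [ω.flatten] := by
  intro N
  induction N with
  | zero =>
      intro ω hlen hlyn _ _
      have : ω = [] := List.length_eq_zero_iff.mp (le_antisymm hlen (by simp))
      exact absurd this hlyn.1
  | succ N ih =>
      intro ω hlen hlyn hne hpf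
      obtain ⟨b, tl, rfl⟩ := List.exists_cons_of_ne_nil hlyn.1
      by_cases h1 : tl = []
      · subst h1
        refine ⟨0, fun _ => [b], rfl, fun i => i.elim0, by simp⟩
      · -- the word has length at least 2
        have hend : ∀ l', b :: tl ≠ l' ++ [b] := by
          intro l' he
          have hl' : l' ≠ [] := by
            rintro rfl
            apply h1
            simpa using he
          have hsuf := lyndon_lt_suffix hlyn hl' (by simp) he
          cases lt_is_lex hsuf with
          | rel h => exact absurd h (lt_irrefl b)
          | cons h => exact absurd h List.not_lex_nil
        set P := factor b (b :: tl) with hP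
        have hfl : P.flatten = b :: tl := flatten_factor b _
        have hsimple : ∀ p ∈ P, IsSimpleWord b p := factor_simple b _ hend
        have hPne : P ≠ [] := factor_ne_nil b (by simp)
        have hb_ne : b ≠ [] := hne b (by simp)
        have hblk : ∀ c ∈ P.map List.flatten,
            ∃ m x, x ≠ b ∧ x ∈ b :: tl ∧ c = blkA b m x := by
          intro c hc
          obtain ⟨p, hp, rfl⟩ := mem_map.mp hc
          obtain ⟨m, x, hx, rfl⟩ := hsimple p hp
          refine ⟨m, x, hx, ?_, flatten_simple⟩
          have : x ∈ P.flatten := mem_flatten.mpr ⟨_, hp, by simp⟩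
          rwa [hfl] at this
        have hne' : ∀ c ∈ P.map List.flatten, c ≠ [] := by
          intro c hc h
          obtain ⟨m, x, hx, hxm, rfl⟩ := hblk c hc
          exact hne x hxm ((List.append_eq_nil_iff.mp h).2)
        have hpf' : ∀ c ∈ P.map List.flatten, ∀ d ∈ P.map List.flatten,
            (c <+: d ∨ d <+: c) → c = d := by
          intro c hc d hd hor
          obtain ⟨m, x, hx, hxm, rfl⟩ := hblk c hc
          obtain ⟨n, y, hy, hym, rfl⟩ := hblk d hd
          have hbm : b ∈ b :: tl := by simp
          rcases hor with h | h
          · obtain ⟨rfl, rfl⟩ := blkA_prefix hb_ne m n (hne x hxm)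
              (hpf b hbm x hxm) (hpf b hbm y hym) (hpf x hxm y hym) hx hy h
            rfl
          · obtain ⟨rfl, rfl⟩ := blkA_prefix hb_ne n m (hne y hym)
              (hpf b hbm y hym) (hpf b hbm x hxm) (hpf y hym x hxm) hy hx h
            rfl
        have hlenP : P.length ≤ N := by
          obtain ⟨p₀, P', hPc⟩ := List.exists_cons_of_ne_nil hPne
          obtain ⟨m0, x0, hx0, hp0⟩ := hsimple p₀ (by rw [hPc]; simp)
          have hm0 : m0 ≠ 0 := by
            rintro rfl
            rw [hPc] at hfl
            simp only [hp0, flatten_cons] at hfl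
            simp only [List.replicate, List.nil_append] at hfl
            have : x0 = b := by
              have := congrArg List.headI hfl
              simpa using this
            exact hx0 this
          have l1 : p₀.length = m0 + 1 := by simp [hp0]
          have l2 : P'.length ≤ P'.flatten.length :=
            length_le_length_flatten (fun p hp =>
              simple_ne_nil (hsimple p (by rw [hPc]; simp [hp])))
          have l3 : P.flatten.length = tl.length + 1 := by rw [hfl]; simp
          rw [hPc] at l3 ⊢
          simp only [flatten_cons, length_append, length_cons] at l3 ⊢
          have hlen2 : tl.length + 1 ≤ N + 1 := by simpa using hlen
          omega
        have hlyn' : IsLyndon (P.map List.flatten) := by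
          constructor
          · simp [hPne]
          · intro U V hU hV hUV
            set k := U.length with hk
            have hUt : U = (P.take k).map List.flatten := by
              rw [map_take, hUV, hk]
              exact (List.take_left (l₁ := U) (l₂ := V)).symm
            have hVt : V = (P.drop k).map List.flatten := by
              rw [map_drop, hUV, hk]
              exact (List.drop_left (l₁ := U) (l₂ := V)).symm
            set u := (P.take k).flatten with hu
            set v := (P.drop k).flatten with hv
            have huv : b :: tl = u ++ v := by
              rw [hu, hv, ← flatten_append, take_append_drop, hfl]
            have hksub : ∀ q ∈ P.take k, q ∈ P := fun q hq => (take_sublist k P).subset hq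
            have hksub' : ∀ q ∈ P.drop k, q ∈ P := fun q hq => (drop_sublist k P).subset hq
            have hune : u ≠ [] := by
              intro h
              have hk0 : 0 < k := List.length_pos_iff.mpr hU
              have htk : P.take k ≠ [] := by
                intro h'
                rcases List.take_eq_nil_iff.mp h' with h'' | h''
                · omega
                · exact absurd h'' hPne
              obtain ⟨q, hq⟩ := List.exists_mem_of_ne_nil _ htk
              exact simple_ne_nil (hsimple q (hksub q hq))
                (flatten_eq_nil_iff.mp h q hq)
            have hkP : k < P.length := by
              have : (P.map List.flatten).length = U.length + V.length := by
                rw [hUV, length_append]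
              have hV0 : 0 < V.length := List.length_pos_iff.mpr hV
              rw [length_map] at this
              omega
            have hvne : v ≠ [] := by
              intro h
              have hdk : P.drop k ≠ [] := by
                intro h'
                have := List.drop_eq_nil_iff.mp h'
                omega
              obtain ⟨q, hq⟩ := List.exists_mem_of_ne_nil _ hdk
              exact simple_ne_nil (hsimple q (hksub' q hq))
                (flatten_eq_nil_iff.mp h q hq)
            have hrot : b :: tl < v ++ u := hlyn.2 u v hune hvne huv
            have hsub : ∀ z ∈ v ++ u, z ∈ b :: tl := by
              intro z hz
              rw [← hfl]
              rcases mem_append.mp hz with h | h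
              · obtain ⟨q, hq, hzq⟩ := mem_flatten.mp h
                exact mem_flatten.mpr ⟨q, hksub' q hq, hzq⟩
              · obtain ⟨q, hq, hzq⟩ := mem_flatten.mp h
                exact mem_flatten.mpr ⟨q, hksub q hq, hzq⟩
            have hflat : (b :: tl).flatten < (v ++ u).flatten :=
              master _ _ hne (fun z hz => hne z (hsub z hz))
                (fun p hp q hq => hpf p hp q (hsub q hq)) hrot
            have hVU : V ++ U = ((P.drop k) ++ (P.take k)).map List.flatten := by
              rw [map_append, ← hUt, ← hVt]
            rw [hVU]
            have hsubnew : ∀ c ∈ ((P.drop k) ++ (P.take k)).map List.flatten,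
                c ∈ P.map List.flatten := by
              intro c hc
              obtain ⟨q, hq, rfl⟩ := mem_map.mp hc
              rcases mem_append.mp hq with h | h
              · exact mem_map.mpr ⟨q, hksub' q h, rfl⟩
              · exact mem_map.mpr ⟨q, hksub q h, rfl⟩
            apply lt_of_flatten_lt hne' (fun c hc => hne' c (hsubnew c hc))
              (fun c hc d hd => hpf' c hc d (hsubnew d hd))
            rw [flatten_map_flatten, flatten_map_flatten, flatten_append, ← hu, ← hv, hfl]
            exact hflat
        obtain ⟨ℓ', ωs', h0', hstep', hlast'⟩ := ih (P.map List.flatten)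
          (by rw [length_map]; exact hlenP) hlyn' hne' hpf'
        refine ⟨ℓ' + 1, Fin.cons (b :: tl) ωs', by simp, ?_, ?_⟩
        · intro i
          induction i using Fin.cases with
          | zero =>
              rw [Fin.castSucc_zero, Fin.cons_zero, Fin.cons_succ, h0']
              exact ⟨P, hfl, fun p hp => hsimple p hp, rfl⟩
          | succ j =>
              rw [← Fin.succ_castSucc, Fin.cons_succ, Fin.cons_succ]
              exact hstep' j
        · rw [← Fin.succ_last, Fin.cons_succ, hlast']
          rw [flatten_map_flatten, hfl]

end LyndonAux

/-- **Every Lyndon-Shirshov word fully partitions**: there is a sequence of simple partitions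
`w ↠ ω₁ ↠ ⋯ ↠ ω_ℓ` starting from `w` (viewed as the word of its single letters) and ending
in the trivial one-block partition `[w]`. -/
theorem lyndonShirshov_fully_partitions {A : Type*} [LinearOrder A]
    (w : List A) (hw : IsLyndon w) :
    ∃ (ℓ : ℕ) (ωs : Fin (ℓ + 1) → List (List A)),
      ωs 0 = w.map (fun x => [x]) ∧
      (∀ i : Fin ℓ, PartStep (ωs i.castSucc) (ωs i.succ)) ∧
      ωs (Fin.last ℓ) = [w] := by
  classical
  open List LyndonAux in
  have hσ : ∀ l : List A, (l.map (fun x => [x])).flatten = l := by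
    intro l
    induction l with
    | nil => rfl
    | cons a l ih => simp [ih]
  have hne : ∀ p ∈ w.map (fun x => [x]), p ≠ [] := by
    intro p hp
    obtain ⟨x, _, rfl⟩ := List.mem_map.mp hp
    simp
  have hpf : ∀ p ∈ w.map (fun x => [x]), ∀ q ∈ w.map (fun x => [x]),
      (p <+: q ∨ q <+: p) → p = q := by
    intro p hp q hq hor
    obtain ⟨x, _, rfl⟩ := List.mem_map.mp hp
    obtain ⟨y, _, rfl⟩ := List.mem_map.mp hq
    rcases hor with h | h
    · exact h.eq_of_length (by simp)
    · exact (h.eq_of_length (by simp)).symm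
  have hlyn : IsLyndon (w.map (fun x => [x])) := by
    constructor
    · simp [hw.1]
    · intro u v hu hv huv
      set k := u.length with hk
      have hUt : u = (w.take k).map (fun x => [x]) := by
        rw [List.map_take, huv, hk]
        exact (List.take_left (l₁ := u) (l₂ := v)).symm
      have hVt : v = (w.drop k).map (fun x => [x]) := by
        rw [List.map_drop, huv, hk]
        exact (List.drop_left (l₁ := u) (l₂ := v)).symm
      have htne : w.take k ≠ [] := by
        intro h; apply hu; rw [hUt, h]; rfl
      have hdne : w.drop k ≠ [] := by
        intro h; apply hv; rw [hVt, h]; rfl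
      have hrot : w < w.drop k ++ w.take k :=
        hw.2 (w.take k) (w.drop k) htne hdne (by rw [List.take_append_drop])
      have hVU : v ++ u = (w.drop k ++ w.take k).map (fun x => [x]) := by
        rw [List.map_append, ← hUt, ← hVt]
      rw [hVU]
      have hsub : ∀ c ∈ (w.drop k ++ w.take k).map (fun x : A => [x]),
          c ∈ w.map (fun x => [x]) := by
        intro c hc
        obtain ⟨x, hx, rfl⟩ := List.mem_map.mp hc
        rcases List.mem_append.mp hx with h | h
        · exact List.mem_map.mpr ⟨x, (List.drop_sublist k w).subset h, rfl⟩
        · exact List.mem_map.mpr ⟨x, (List.take_sublist k w).subset h, rfl⟩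
      apply lt_of_flatten_lt hne (fun c hc => hne c (hsub c hc))
        (fun c hc d hd => hpf c hc d (hsub d hd))
      rw [hσ, hσ]
      exact hrot
  obtain ⟨ℓ, ωs, h0, hstep, hlast⟩ := LyndonAux.main (w.map (fun x => [x])).length
    (w.map (fun x => [x])) le_rfl hlyn hne hpf
  exact ⟨ℓ, ωs, h0, hstep, by rw [hlast, hσ]⟩
end

section
/- Let w₁ and w₂ be Lyndon-Shirshov words over a totally ordered alphabet and suppose w₁ = aⁿb is a-simple (n ≥ 1, b ≠ a). Then the configuration pairing ⟨★(w₁), ⌊w₂⌋⟩ equals n! if w₂ = w₁, and equals 0 otherwise. The same conclusion holds if instead w₂ is assumed to be a-simple. -/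
open scoped Classical

/-- Lie bracket expressions in letters from `A`: the free magma on `A`. -/
inductive LieExpr (A : Type*) : Type _
  | of : A → LieExpr A
  | br : LieExpr A → LieExpr A → LieExpr A

namespace LieExpr

variable {A : Type*}

/-- The list of letters of a Lie bracket expression (its positions, read left to right). -/
def letters : LieExpr A → List A
  | of a => [a]
  | br h k => h.letters ++ k.letters

/-- The number of positions of a Lie bracket expression. -/
def size : LieExpr A → ℕ
  | of _ => 1
  | br h k => h.size + k.size

/-- For each sub-bracket `[H,K]` of the expression (placed at offset `i`), the pair of
position intervals (recorded as `(start, length)`) occupied by `H` and by `K`. -/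
def intervals : LieExpr A → ℕ → List ((ℕ × ℕ) × (ℕ × ℕ))
  | of _, _ => []
  | br h k, i =>
      ((i, h.size), (i + h.size, k.size)) :: (h.intervals i ++ k.intervals (i + h.size))

/-- `iterBr L n K = [L,[L,…,[L,K]…]]` with `n` copies of `L`. -/
def iterBr (L : LieExpr A) : ℕ → LieExpr A → LieExpr A
  | 0, K => K
  | n + 1, K => br L (iterBr L n K)

end LieExpr

/-- A finite directed graph with vertices labeled by letters from `A`. -/
structure LGraph (A : Type*) where
  V : Type
  [instFintype : Fintype V]
  [instDecEq : DecidableEq V]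
  edges : Finset (V × V)
  label : V → A

attribute [instance] LGraph.instFintype LGraph.instDecEq

namespace LGraph

variable {A : Type*}

/-- The full subgraph of `G` on the vertex set `S` is connected: `S` is nonempty and any two
vertices of `S` are joined by a path of edges of `G` lying inside `S` (ignoring directions). -/
def ConnOn (G : LGraph A) (S : Finset G.V) : Prop :=
  S.Nonempty ∧ ∀ x ∈ S, ∀ y ∈ S,
    Relation.ReflTransGen (fun u v => u ∈ S ∧ v ∈ S ∧ ((u, v) ∈ G.edges ∨ (v, u) ∈ G.edges)) x y

/-- The edges of `G` joining the vertex sets `S` and `T` (in either direction). -/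
def between (G : LGraph A) (S T : Finset G.V) : Finset (G.V × G.V) :=
  G.edges.filter fun e => (e.1 ∈ S ∧ e.2 ∈ T) ∨ (e.1 ∈ T ∧ e.2 ∈ S)

end LGraph

section Pairing

variable {A : Type*}

/-- The set of vertices sent by `σ` to positions in the interval `[st, st + len)`. -/
def posSet (G : LGraph A) {m : ℕ} (σ : G.V ≃ Fin m) (st len : ℕ) : Finset G.V :=
  Finset.univ.filter fun v => st ≤ (σ v : ℕ) ∧ (σ v : ℕ) < st + len

/-- The condition for the `σ`-configuration pairing to be nonzero: for every sub-bracket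
`[H,K]` of `L`, the full subgraphs of `G` on `σ⁻¹H` and on `σ⁻¹K` are both connected and
there is exactly one edge of `G` between them. -/
def Good (G : LGraph A) (L : LieExpr A) (σ : G.V ≃ Fin L.letters.length) : Prop :=
  ∀ q ∈ L.intervals 0,
    G.ConnOn (posSet G σ q.1.1 q.1.2) ∧ G.ConnOn (posSet G σ q.2.1 q.2.2) ∧
      (G.between (posSet G σ q.1.1 q.1.2) (posSet G σ q.2.1 q.2.2)).card = 1

/-- The `σ`-configuration pairing `⟨G, L⟩_σ`: zero unless `σ` is good, and otherwise `(-1)ⁿ`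
where `n` is the number of edges of `G` pointing (under `σ`) from right to left in `L`. -/
noncomputable def pairingAt (G : LGraph A) (L : LieExpr A)
    (σ : G.V ≃ Fin L.letters.length) : ℤ :=
  if Good G L σ then
    (-1 : ℤ) ^ (G.edges.filter fun e => (σ e.2 : ℕ) < (σ e.1 : ℕ)).card
  else 0

/-- The finite set of label-preserving bijections from the vertices of `G` to the
positions of `L`. -/
noncomputable def Bijections (G : LGraph A) (L : LieExpr A) :
    Finset (G.V ≃ Fin L.letters.length) :=
  Finset.univ.filter fun σ => ∀ v, G.label v = L.letters.get (σ v)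

/-- The configuration pairing `⟨G, L⟩`: the sum of `⟨G, L⟩_σ` over all label-preserving
bijections `σ`. -/
noncomputable def pairing (G : LGraph A) (L : LieExpr A) : ℤ :=
  ∑ σ ∈ Bijections G L, pairingAt G L σ

end Pairing

/-- Trees recording the nested structure of a fully partitioned word: a fully partitioned
word is either a single letter or `αⁿχ` (`n ≥ 1`) where `α` and `χ` are fully partitioned. -/
inductive FP (A : Type*) : Type _
  | letter : A → FP A
  | node : FP A → ℕ → FP A → FP A

namespace FP

variable {A : Type*}

/-- The underlying word of a fully-partitioned-word tree. -/
def word : FP A → List A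
  | letter x => [x]
  | node α n χ => (List.replicate n α.word).flatten ++ χ.word

/-- `IsBlock b t`: `t` is (the tree of) a valid block of the level for which `b` is the base
(i.e. `b` is the first block of the previous level): either `t = bʲu` with `j ≥ 1` and `u` a
block of the previous level, `u ≠ b`; or (collapsed case, `j = 0`) `t` is itself a block of
the previous level different from `b`. -/
def IsBlock : FP A → FP A → Prop
  | letter a, t =>
      (∃ j x, 1 ≤ j ∧ t = node (letter a) j (letter x) ∧ x ≠ a) ∨
      (∃ x, t = letter x ∧ x ≠ a)
  | node c m v, t =>
      (∃ j u, 1 ≤ j ∧ t = node (node c m v) j u ∧ IsBlock c u ∧ u ≠ node c m v) ∨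
      (IsBlock c t ∧ t ≠ node c m v)

/-- `IsBlockUnder b u` : `u` is a block of the level of `b` itself (a single letter when `b`
is a letter, and a block over the base of `b` otherwise). -/
def IsBlockUnder : FP A → FP A → Prop
  | letter _, u => ∃ x, u = letter x
  | node c _ _, u => IsBlock c u

/-- `t.Valid`: `t` is the tree of nested simple partitions of a word which fully partitions:
each node is `αⁿχ` with `n ≥ 1`, where `α` (the base, i.e. the first block of its level) is
itself valid, and `χ` is a block of the same level as `α` with `χ ≠ α`. -/
def Valid : FP A → Prop
  | letter _ => True
  | node c m v => Valid c ∧ 1 ≤ m ∧ IsBlockUnder c v ∧ v ≠ c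

/-- The left-greedy bracketing `⌊w⌋` of a fully partitioned word:
`⌊x⌋ = x`, and `⌊αⁿχ⌋ = [⌊α⌋,[⌊α⌋,…,[⌊α⌋,⌊χ⌋]…]]`. -/
def bracket : FP A → LieExpr A
  | letter x => .of x
  | node α n χ => LieExpr.iterBr α.bracket n χ.bracket

end FP

/-- A finite directed labeled graph with a distinguished anchor vertex. -/
structure AGraph (A : Type*) extends LGraph A where
  anchor : V

namespace FP

variable {A : Type*}

/-- The star graph `★(w)` of a fully partitioned word: `★(x)` is a single anchor vertex
labeled `x`; `★(αⁿχ)` consists of `n` disjoint copies of `★(α)` and one copy of `★(χ)`,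
with an edge from the anchor of each copy of `★(α)` to the anchor of `★(χ)`, which is the
anchor of the whole graph. -/
def star : FP A → AGraph A
  | letter x => { V := PUnit, edges := ∅, label := fun _ => x, anchor := PUnit.unit }
  | node α n χ =>
      let Gα := star α
      let Gχ := star χ
      { V := (Fin n × Gα.V) ⊕ Gχ.V
        edges :=
          ((Finset.univ ×ˢ Gα.edges).image fun p =>
              (Sum.inl (p.1, p.2.1), Sum.inl (p.1, p.2.2))) ∪
          (Gχ.edges.image fun e => (Sum.inr e.1, Sum.inr e.2)) ∪
          (Finset.univ.image fun k : Fin n => (Sum.inl (k, Gα.anchor), Sum.inr Gχ.anchor))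
        label := Sum.elim (fun p => Gα.label p.2) Gχ.label
        anchor := Sum.inr Gχ.anchor }

end FP

section Aux

variable {A : Type*}

/-! ### List helpers -/

lemma flatten_replicate_singleton (k : ℕ) (z : A) :
    (List.replicate k [z]).flatten = List.replicate k z := by
  induction k with
  | zero => rfl
  | succ k ih => simp [List.replicate_succ, ih]

lemma coe_flatten_replicate (n : ℕ) (w : List A) :
    (((List.replicate n w).flatten : List A) : Multiset A) = n • (w : Multiset A) := by
  induction n with
  | zero => rfl
  | succ n ih =>
    simp only [List.replicate_succ, List.flatten_cons, ← Multiset.coe_add, ih, succ_nsmul]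
    rw [add_comm]

/-! ### FP word lemmas -/

namespace FP

lemma word_ne_nil : ∀ t : FP A, t.word ≠ []
  | letter x => by simp [word]
  | node α n χ => by
    have h := word_ne_nil χ
    simp [word]
    intro _ h2
    exact h h2

lemma two_letters : ∀ (c : FP A) (k : ℕ) (v : FP A), (node c k v).Valid →
    ∃ x ∈ (node c k v).word, ∃ y ∈ (node c k v).word, x ≠ y
  | letter z, k, v, hv => by
    obtain ⟨-, hk, hb, hne⟩ := hv
    obtain ⟨y, rfl⟩ := hb
    have hy : y ≠ z := fun h => hne (by rw [h])
    refine ⟨z, ?_, y, ?_, fun h => hy h.symm⟩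
    · simp only [word, flatten_replicate_singleton]
      exact List.mem_append_left _ (List.mem_replicate.2 ⟨by omega, rfl⟩)
    · simp only [word, flatten_replicate_singleton]
      exact List.mem_append_right _ (by simp)
  | node c' k' u', k, v, hv => by
    obtain ⟨hvc, hk, hb, hne⟩ := hv
    obtain ⟨x, hx, y, hy, hxy⟩ := two_letters c' k' u' hvc
    have hsub : ∀ z, z ∈ (node c' k' u').word → z ∈ (node (node c' k' u') k v).word := by
      intro z hz
      show z ∈ (List.replicate k (node c' k' u').word).flatten ++ v.word
      refine List.mem_append_left _ ?_
      rw [List.mem_flatten]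
      exact ⟨(node c' k' u').word, List.mem_replicate.2 ⟨by omega, rfl⟩, hz⟩
    exact ⟨x, hsub x hx, y, hsub y hy, hxy⟩

lemma valid_word_simple (a b : A) :
    ∀ (t : FP A), t.Valid → ∀ n : ℕ, 1 ≤ n → t.word = List.replicate n a ++ [b] →
      t = node (letter a) n (letter b)
  | letter x, _, n, hn, hw => by
    have h := congrArg List.length hw
    simp [word] at h
    omega
  | node (letter z) m v, hv, n, hn, hw => by
    obtain ⟨-, hm, hb, hne⟩ := hv
    obtain ⟨y, rfl⟩ := hb
    have hw' : List.replicate m z ++ [y] = List.replicate n a ++ [b] := by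
      simpa only [word, flatten_replicate_singleton] using hw
    have hlen : m = n := by
      have := congrArg List.length hw'
      simp at this
      omega
    subst hlen
    obtain ⟨h1, h2⟩ := List.append_inj hw' (by simp)
    have hy : y = b := by simpa using h2
    have hz : z = a := by
      have : z ∈ List.replicate m a := h1 ▸ List.mem_replicate.2 ⟨by omega, rfl⟩
      exact List.eq_of_mem_replicate this
    rw [hy, hz]
  | node (node c k u) m v, hv, n, hn, hw => by
    exfalso
    obtain ⟨hvα, hm, hb, hne⟩ := hv
    obtain ⟨x, hx, y, hy, hxy⟩ := two_letters c k u hvα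
    set α := node c k u with hα
    obtain ⟨m', rfl⟩ : ∃ m', m = m' + 1 := ⟨m - 1, by omega⟩
    rw [word] at hw
    rw [List.replicate_succ, List.flatten_cons, List.append_assoc] at hw
    set R := (List.replicate m' α.word).flatten ++ v.word with hR
    have hRne : R ≠ [] := by
      have := word_ne_nil v
      simp [hR]
      intro _
      exact this
    have hlen : α.word.length ≤ n := by
      have h1 := congrArg List.length hw
      simp at h1
      have h2 : 1 ≤ R.length := List.length_pos_iff.2 hRne
      omega
    have htake : α.word = (List.replicate n a ++ [b]).take α.word.length := by
      rw [← hw, List.take_left]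
    rw [List.take_append_of_le_length (by simpa using hlen), List.take_replicate] at htake
    have hall : ∀ z, z ∈ α.word → z = a := by
      intro z hz
      rw [htake] at hz
      exact List.eq_of_mem_replicate hz
    exact hxy ((hall x hx).trans (hall y hy).symm)

end FP

/-! ### LieExpr lemmas -/

namespace LieExpr

lemma letters_iterBr (L K : LieExpr A) : ∀ n : ℕ,
    (iterBr L n K).letters = (List.replicate n L.letters).flatten ++ K.letters
  | 0 => by simp [iterBr]
  | n + 1 => by
    rw [iterBr, letters, letters_iterBr L K n, List.replicate_succ, List.flatten_cons,
      List.append_assoc]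

lemma size_iterBr_of (a b : A) : ∀ n : ℕ, (iterBr (of a) n (of b)).size = n + 1
  | 0 => rfl
  | n + 1 => by rw [iterBr, size, size_iterBr_of a b n, size]; omega

lemma mem_intervals_iterBr (a b : A) : ∀ (n i : ℕ) (q : (ℕ × ℕ) × (ℕ × ℕ)),
    (q ∈ (iterBr (of a) n (of b)).intervals i ↔
      ∃ j, j < n ∧ q = ((i + j, 1), (i + j + 1, n - j)))
  | 0, i, q => by simp [iterBr, intervals]
  | n + 1, i, q => by
    rw [iterBr, intervals]
    simp only [intervals, size, size_iterBr_of, List.nil_append, List.mem_cons]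
    rw [mem_intervals_iterBr a b n (i + 1) q]
    constructor
    · rintro (rfl | ⟨j, hj, rfl⟩)
      · exact ⟨0, by omega, by simp⟩
      · refine ⟨j + 1, by omega, ?_⟩
        have h1 : i + 1 + j = i + (j + 1) := by omega
        have h2 : n - j = n + 1 - (j + 1) := by omega
        rw [h1, h2]
    · rintro ⟨j, hj, rfl⟩
      rcases Nat.eq_zero_or_pos j with rfl | hjpos
      · left; simp
      · right
        refine ⟨j - 1, by omega, ?_⟩
        have h1 : i + 1 + (j - 1) = i + j := by omega
        have h2 : n - (j - 1) = n + 1 - j := by omega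
        rw [h1, h2]

end LieExpr

lemma FP.letters_bracket : ∀ t : FP A, t.bracket.letters = t.word
  | .letter x => rfl
  | .node α n χ => by
    rw [FP.bracket, LieExpr.letters_iterBr, FP.letters_bracket α, FP.letters_bracket χ, FP.word]

/-! ### Multiset of labels of a star graph -/

lemma multiset_bind_const {β γ : Type*} (s : Multiset β) (m : Multiset γ) :
    s.bind (fun _ => m) = Multiset.card s • m := by
  induction s using Multiset.induction with
  | empty => simp
  | cons a s ih =>
    simp only [Multiset.cons_bind, ih, Multiset.card_cons]
    rw [add_comm (Multiset.card s) 1, add_nsmul, one_nsmul]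

lemma map_snd_univ_val {β : Type*} [Fintype β] (n : ℕ) (g : β → A) :
    Multiset.map (fun p : Fin n × β => g p.2) (Finset.univ : Finset (Fin n × β)).val
      = n • Multiset.map g (Finset.univ : Finset β).val := by
  rw [← Finset.univ_product_univ, Finset.product_val]
  show Multiset.map _ (Multiset.product _ _) = _
  rw [Multiset.product, Multiset.map_bind]
  simp only [Multiset.map_map, Function.comp]
  rw [multiset_bind_const]
  congr 1
  simp

lemma FP.star_labels : ∀ t : FP A,
    Multiset.map t.star.label (Finset.univ : Finset t.star.V).val = (t.word : Multiset A)
  | .letter x => by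
    simp [FP.star, FP.word]
    rfl
  | .node α n χ => by
    have ihα := FP.star_labels α
    have ihχ := FP.star_labels χ
    show Multiset.map (Sum.elim (fun p => α.star.label p.2) χ.star.label)
      (Finset.univ : Finset ((Fin n × α.star.V) ⊕ χ.star.V)).val = _
    rw [← Finset.univ_disjSum_univ, Finset.val_disjSum, Multiset.disjSum]
    rw [Multiset.map_add, Multiset.map_map, Multiset.map_map]
    simp only [Function.comp_def, Sum.elim_inl, Sum.elim_inr]
    rw [map_snd_univ_val, ihα, ihχ]
    show _ = (((List.replicate n α.word).flatten ++ χ.word : List A) : Multiset A)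
    rw [← Multiset.coe_add, coe_flatten_replicate]

end Aux

section LyndonAux

variable {A : Type*} [LinearOrder A]

lemma not_replicate_lt (a b : A) (hab : a < b) :
    ∀ (i : ℕ) (r₁ r₂ : List A),
      ¬ (List.replicate i a ++ b :: r₁ < List.replicate i a ++ a :: r₂)
  | 0, r₁, r₂ => by
    intro h
    have h' : List.Lex (· < ·) (b :: r₁) (a :: r₂) := h
    cases h' with
    | rel h => exact absurd h (asymm hab)
    | cons h => exact absurd hab (lt_irrefl _)
  | i + 1, r₁, r₂ => by
    intro h
    have h' : List.Lex (· < ·) (a :: (List.replicate i a ++ b :: r₁))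
        (a :: (List.replicate i a ++ a :: r₂)) := by
      simpa [List.replicate_succ] using h
    rw [List.lex_cons_iff] at h'
    exact not_replicate_lt a b hab i r₁ r₂ h'

lemma lyndon_lt {a b : A} {n : ℕ} (hn : 1 ≤ n) (hba : b ≠ a)
    (hl : IsLyndon (List.replicate n a ++ [b])) : a < b := by
  have h := hl.2 (List.replicate n a) [b]
    (by simp only [ne_eq, List.replicate_eq_nil_iff]; omega) (by simp) rfl
  obtain ⟨n', rfl⟩ : ∃ n', n = n' + 1 := ⟨n - 1, by omega⟩
  have h' : List.Lex (· < ·) (a :: (List.replicate n' a ++ [b]))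
      (b :: List.replicate (n' + 1) a) := by
    simpa [List.replicate_succ] using h
  cases h' with
  | rel h => exact h
  | cons h => exact absurd rfl hba

lemma lyndon_perm_simple {a b : A} (hab : a < b) {n : ℕ} (hn : 1 ≤ n) {w : List A}
    (hl : IsLyndon w) (hp : w.Perm (List.replicate n a ++ [b])) :
    w = List.replicate n a ++ [b] := by
  have hbw : b ∈ w := hp.mem_iff.2 (by simp)
  obtain ⟨u, v, rfl⟩ := List.append_of_mem hbw
  have hcount : (u ++ b :: v).count b = 1 := by
    rw [hp.count_eq]
    simp [List.count_append, List.count_replicate, (ne_of_gt hab).symm]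
  have hbu : b ∉ u := by
    intro hmem
    have h1 : 1 ≤ u.count b := List.one_le_count_iff.2 hmem
    have h2 : (u ++ b :: v).count b = u.count b + (v.count b + 1) := by
      simp [List.count_append, List.count_cons]
    omega
  have hbv : b ∉ v := by
    intro hmem
    have h1 : 1 ≤ v.count b := List.one_le_count_iff.2 hmem
    have h2 : (u ++ b :: v).count b = u.count b + (v.count b + 1) := by
      simp [List.count_append, List.count_cons]
    omega
  have hmem : ∀ x ∈ u ++ b :: v, x = a ∨ x = b := by
    intro x hx
    have := hp.mem_iff.1 hx
    simp only [List.mem_append, List.mem_singleton] at this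
    rcases this with h | h
    · exact Or.inl (List.eq_of_mem_replicate h)
    · exact Or.inr h
  have hua : ∀ x ∈ u, x = a := by
    intro x hx
    rcases hmem x (List.mem_append_left _ hx) with h | h
    · exact h
    · exact absurd (h ▸ hx) hbu
  have hva : ∀ x ∈ v, x = a := by
    intro x hx
    rcases hmem x (List.mem_append_right _ (List.mem_cons_of_mem _ hx)) with h | h
    · exact h
    · exact absurd (h ▸ hx) hbv
  obtain ⟨i, hu'⟩ : ∃ i, u = List.replicate i a := ⟨u.length, List.eq_replicate_of_mem hua⟩
  obtain ⟨j, hv'⟩ : ∃ j, v = List.replicate j a := ⟨v.length, List.eq_replicate_of_mem hva⟩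
  subst hu' hv'
  have hlen : i + j = n := by
    have := hp.length_eq
    simp at this
    omega
  rcases Nat.eq_zero_or_pos j with rfl | hjpos
  · rw [← hlen]
    simp
  · exfalso
    obtain ⟨j', rfl⟩ : ∃ j', j = j' + 1 := ⟨j - 1, by omega⟩
    have hlt := hl.2 (List.replicate i a ++ [b]) (List.replicate (j' + 1) a)
      (by simp) (by simp) (by simp)
    have hrw : List.replicate (j' + 1) a ++ (List.replicate i a ++ [b])
        = List.replicate i a ++ a :: (List.replicate j' a ++ [b]) := by
      rw [show (a :: (List.replicate j' a ++ [b]) : List A)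
            = (a :: List.replicate j' a) ++ [b] from rfl]
      rw [← List.replicate_succ]
      rw [← List.append_assoc, ← List.replicate_add, ← List.append_assoc,
        ← List.replicate_add]
      congr 2
      omega
    rw [hrw] at hlt
    exact not_replicate_lt a b hab i (List.replicate (j' + 1) a) _ hlt

end LyndonAux

section BijAux

variable {A : Type*}

lemma bij_multiset (G : LGraph A) (L : LieExpr A) (σ : G.V ≃ Fin L.letters.length)
    (hσ : σ ∈ Bijections G L) :
    Multiset.map G.label (Finset.univ : Finset G.V).val = (L.letters : Multiset A) := by
  rw [Bijections, Finset.mem_filter] at hσ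
  have h := hσ.2
  have e1 : Multiset.map G.label (Finset.univ : Finset G.V).val
      = Multiset.map (fun v => L.letters.get (σ v)) Finset.univ.val :=
    Multiset.map_congr rfl (fun v _ => h v)
  have e2 : Multiset.map (fun v => L.letters.get (σ v)) (Finset.univ : Finset G.V).val
      = Multiset.map L.letters.get (Multiset.map σ Finset.univ.val) := by
    rw [Multiset.map_map]; rfl
  have e3 : Multiset.map (⇑σ) (Finset.univ : Finset G.V).val
      = (Finset.univ : Finset (Fin L.letters.length)).val := by
    have := congrArg Finset.val (Finset.map_univ_equiv σ)
    rwa [Finset.map_val] at this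
  rw [e1, e2, e3, Fin.univ_val_map, List.ofFn_get]

end BijAux

section Canonical

variable {A : Type*}

lemma pairing_abstract (G : LGraph A) (L : LieExpr A) (a b : A) (hab : a ≠ b)
    (n : ℕ) (hn : 1 ≤ n) (vs : G.V)
    (hcard : Fintype.card G.V = n + 1)
    (hlab : ∀ v : G.V, G.label v = if v = vs then b else a)
    (hedges : ∀ e : G.V × G.V, e ∈ G.edges ↔ e.1 ≠ vs ∧ e.2 = vs)
    (hlet : L.letters = List.replicate n a ++ [b])
    (hint : ∀ q, q ∈ L.intervals 0 ↔ ∃ j, j < n ∧ q = ((j, 1), (j + 1, n - j))) :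
    pairing G L = (n.factorial : ℤ) := by
  have hlen : L.letters.length = n + 1 := by rw [hlet]; simp
  have hget : ∀ i : Fin L.letters.length,
      L.letters.get i = if (i : ℕ) < n then a else b := by
    intro i
    have hi : (i : ℕ) < n + 1 := hlen ▸ i.isLt
    rw [List.get_eq_getElem]
    simp only [hlet]
    by_cases h : (i : ℕ) < n
    · rw [List.getElem_append_left (by simpa using h), List.getElem_replicate, if_pos h]
    · have hin : (i : ℕ) = n := by omega
      rw [if_neg h, List.getElem_append_right (by simpa using hin.ge)]
      simp [hin]
  have hpos : ∀ (σ : G.V ≃ Fin L.letters.length) (v : G.V) (st len : ℕ),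
      v ∈ posSet G σ st len ↔ st ≤ (σ v : ℕ) ∧ (σ v : ℕ) < st + len := by
    intro σ v st len
    rw [posSet, Finset.mem_filter]
    simp
  have hchar : ∀ σ : G.V ≃ Fin L.letters.length, σ ∈ Bijections G L ↔
      ((∀ v, v ≠ vs → (σ v : ℕ) < n) ∧ (σ vs : ℕ) = n) := by
    intro σ
    rw [Bijections, Finset.mem_filter]
    simp only [Finset.mem_univ, true_and]
    constructor
    · intro h
      constructor
      · intro v hv
        have hp := h v
        rw [hlab, if_neg hv, hget] at hp
        by_contra hc
        rw [if_neg hc] at hp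
        exact hab hp
      · have hp := h vs
        rw [hlab, if_pos rfl, hget] at hp
        have hi : (σ vs : ℕ) < n + 1 := hlen ▸ (σ vs).isLt
        by_cases hc : (σ vs : ℕ) < n
        · rw [if_pos hc] at hp; exact absurd hp.symm hab
        · omega
    · rintro ⟨h1, h2⟩ v
      rw [hlab, hget]
      by_cases hv : v = vs
      · subst hv; rw [if_pos rfl, if_neg (by omega)]
      · rw [if_neg hv, if_pos (h1 v hv)]
  have hgood : ∀ σ, σ ∈ Bijections G L → Good G L σ := by
    intro σ hσ
    obtain ⟨h1, h2⟩ := (hchar σ).1 hσ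
    intro q hq
    rw [hint] at hq
    obtain ⟨j, hj, rfl⟩ := hq
    show G.ConnOn (posSet G σ j 1) ∧ G.ConnOn (posSet G σ (j + 1) (n - j)) ∧
      (G.between (posSet G σ j 1) (posSet G σ (j + 1) (n - j))).card = 1
    have hanch : vs ∈ posSet G σ (j + 1) (n - j) := by
      rw [hpos, h2]; omega
    refine ⟨⟨?_, ?_⟩, ⟨⟨_, hanch⟩, ?_⟩, ?_⟩
    · refine ⟨σ.symm ⟨j, by omega⟩, ?_⟩
      rw [hpos, Equiv.apply_symm_apply]
      simp
    · intro x hx y hy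
      rw [hpos] at hx hy
      have hxy : x = y := σ.injective (Fin.ext (by omega))
      subst hxy; exact Relation.ReflTransGen.refl
    · have hsym : Symmetric (fun u v => u ∈ posSet G σ (j + 1) (n - j) ∧
          v ∈ posSet G σ (j + 1) (n - j) ∧ ((u, v) ∈ G.edges ∨ (v, u) ∈ G.edges)) := by
        rintro u v ⟨ha', hb', hc'⟩; exact ⟨hb', ha', hc'.symm⟩
      have key : ∀ x ∈ posSet G σ (j + 1) (n - j),
          Relation.ReflTransGen (fun u v => u ∈ posSet G σ (j + 1) (n - j) ∧
            v ∈ posSet G σ (j + 1) (n - j) ∧ ((u, v) ∈ G.edges ∨ (v, u) ∈ G.edges)) x vs := by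
        intro x hx
        by_cases hxv : x = vs
        · subst hxv; exact Relation.ReflTransGen.refl
        · exact Relation.ReflTransGen.single
            ⟨hx, hanch, Or.inl ((hedges (x, vs)).2 ⟨hxv, rfl⟩)⟩
      intro x hx y hy
      exact (key x hx).trans ((@Relation.ReflTransGen.stdSymm _ _ ⟨fun _ _ h => hsym h⟩).symm _ _ (key y hy))
    · have hjlt : j < L.letters.length := by omega
      have hv₀ : (σ (σ.symm ⟨j, hjlt⟩) : ℕ) = j := by rw [Equiv.apply_symm_apply]
      have hv₀ne : σ.symm ⟨j, hjlt⟩ ≠ vs := by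
        intro h
        rw [h, h2] at hv₀
        omega
      have hbet : G.between (posSet G σ j 1) (posSet G σ (j + 1) (n - j))
          = {(σ.symm ⟨j, hjlt⟩, vs)} := by
        ext e
        rw [LGraph.between, Finset.mem_filter, Finset.mem_singleton, hedges]
        constructor
        · rintro ⟨⟨hne, he2⟩, hcond⟩
          rcases hcond with ⟨hc1, hc2⟩ | ⟨hc1, hc2⟩
          · rw [hpos] at hc1
            have he1 : e.1 = σ.symm ⟨j, hjlt⟩ := σ.injective (Fin.ext (by omega))
            rw [Prod.ext_iff]
            exact ⟨he1, he2⟩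
          · rw [hpos, he2, h2] at hc2
            omega
        · rintro rfl
          refine ⟨⟨hv₀ne, rfl⟩, Or.inl ⟨?_, hanch⟩⟩
          rw [hpos]
          simp only [hv₀]
          omega
      rw [hbet, Finset.card_singleton]
  have hone : ∀ σ ∈ Bijections G L, pairingAt G L σ = 1 := by
    intro σ hσ
    obtain ⟨h1, h2⟩ := (hchar σ).1 hσ
    rw [pairingAt, if_pos (hgood σ hσ)]
    have hfe : (G.edges.filter fun e => ((σ e.2 : ℕ) < (σ e.1 : ℕ))) = ∅ := by
      rw [Finset.filter_eq_empty_iff]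
      intro e he
      rw [hedges] at he
      have hb2 : (σ e.2 : ℕ) = n := by rw [he.2, h2]
      have hb1 : (σ e.1 : ℕ) < n := h1 e.1 he.1
      omega
    rw [hfe, Finset.card_empty, pow_zero]
  -- counting
  have hcard1 : Fintype.card {v : G.V // v ≠ vs} = n := by
    simp only [ne_eq]
    rw [Fintype.card_subtype_compl, Fintype.card_subtype_eq, hcard]
    omega
  have eFin : {i : Fin L.letters.length // (i : ℕ) < n} ≃ Fin n :=
    { toFun := fun i => ⟨(i.1 : ℕ), i.2⟩
      invFun := fun k => ⟨⟨(k : ℕ), by rw [hlen]; omega⟩, k.2⟩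
      left_inv := fun i => rfl
      right_inv := fun k => rfl }
  have hcard2 : Fintype.card {i : Fin L.letters.length // (i : ℕ) < n} = n := by
    rw [Fintype.card_congr eFin, Fintype.card_fin]
  have ecc : {v : G.V // v ≠ vs} ≃ {i : Fin L.letters.length // (i : ℕ) < n} :=
    Fintype.equivOfCardEq (by rw [hcard1, hcard2])
  have hcardE : Fintype.card ({v : G.V // v ≠ vs} ≃ {i : Fin L.letters.length // (i : ℕ) < n})
      = n.factorial := by
    rw [Fintype.card_equiv ecc, hcard1]
  have hnlt : n < L.letters.length := by omega
  let Ψ : ({v : G.V // v ≠ vs} ≃ {i : Fin L.letters.length // (i : ℕ) < n}) →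
      (G.V ≃ Fin L.letters.length) := fun τ =>
    { toFun := fun v => if h : v = vs then ⟨n, hnlt⟩ else (τ ⟨v, h⟩).1
      invFun := fun i => if h : (i : ℕ) < n then (τ.symm ⟨i, h⟩).1 else vs
      left_inv := by
        intro v
        dsimp only
        by_cases h : v = vs
        · rw [dif_pos h, dif_neg (show ¬((⟨n, hnlt⟩ : Fin L.letters.length) : ℕ) < n by simp)]
          exact h.symm
        · rw [dif_neg h, dif_pos (τ ⟨v, h⟩).2]
          have : (⟨((τ ⟨v, h⟩).1 : Fin L.letters.length), (τ ⟨v, h⟩).2⟩ :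
              {i : Fin L.letters.length // (i : ℕ) < n}) = τ ⟨v, h⟩ := rfl
          rw [this, Equiv.symm_apply_apply]
      right_inv := by
        intro i
        dsimp only
        by_cases h : (i : ℕ) < n
        · rw [dif_pos h, dif_neg (τ.symm ⟨i, h⟩).2]
          have : (⟨((τ.symm ⟨i, h⟩).1 : G.V), (τ.symm ⟨i, h⟩).2⟩ :
              {v : G.V // v ≠ vs}) = τ.symm ⟨i, h⟩ := rfl
          rw [this, Equiv.apply_symm_apply]
        · rw [dif_neg h, dif_pos rfl]
          have hi : (i : ℕ) < n + 1 := hlen ▸ i.isLt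
          exact Fin.ext (show (n : ℕ) = (i : ℕ) by omega) }
  have hΨ1 : ∀ τ (v : G.V) (h : v ≠ vs), Ψ τ v = ((τ ⟨v, h⟩).1 : Fin L.letters.length) := by
    intro τ v h
    exact dif_neg h
  have hΨ2 : ∀ τ, ((Ψ τ vs : Fin L.letters.length) : ℕ) = n := by
    intro τ
    exact congrArg Fin.val (dif_pos rfl)
  have himg : Bijections G L = Finset.univ.image Ψ := by
    ext σ
    rw [hchar, Finset.mem_image]
    constructor
    · rintro ⟨h1, h2⟩
      refine ⟨{ toFun := fun v => ⟨σ v.1, h1 v.1 v.2⟩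
                invFun := fun i => ⟨σ.symm i.1, ?_⟩
                left_inv := fun v => Subtype.ext (σ.symm_apply_apply v.1)
                right_inv := fun i => Subtype.ext (σ.apply_symm_apply i.1) },
              Finset.mem_univ _, ?_⟩
      · intro h
        have h' : σ (σ.symm i.1) = σ vs := congrArg σ h
        rw [Equiv.apply_symm_apply] at h'
        have := i.2
        rw [h'] at this
        omega
      · apply Equiv.ext
        intro v
        by_cases h : v = vs
        · subst h
          apply Fin.ext
          rw [hΨ2, h2]
        · rw [hΨ1 _ v h]
          rfl
    · rintro ⟨τ, -, rfl⟩
      constructor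
      · intro v hv
        rw [hΨ1 τ v hv]
        exact (τ ⟨v, hv⟩).2
      · exact hΨ2 τ
  have hinjΨ : Function.Injective Ψ := by
    intro τ τ' h
    apply Equiv.ext
    rintro ⟨v, hv⟩
    apply Subtype.ext
    have h' : Ψ τ v = Ψ τ' v := congrFun (congrArg _ h) v
    rw [hΨ1 τ v hv, hΨ1 τ' v hv] at h'
    exact h'
  have hcardB : (Bijections G L).card = n.factorial := by
    rw [himg, Finset.card_image_of_injective _ hinjΨ, Finset.card_univ, hcardE]
  rw [pairing, Finset.sum_congr rfl hone, Finset.sum_const, hcardB, nsmul_eq_mul, mul_one]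

lemma pairing_canonical (a b : A) (hab : a ≠ b) (n : ℕ) (hn : 1 ≤ n) :
    pairing (FP.node (FP.letter a) n (FP.letter b)).star.toLGraph
      (FP.node (FP.letter a) n (FP.letter b)).bracket = (n.factorial : ℤ) := by
  apply pairing_abstract _ _ a b hab n hn (Sum.inr PUnit.unit)
  · show Fintype.card ((Fin n × PUnit) ⊕ PUnit) = n + 1
    simp
  · intro v
    rcases v with p | u
    · simp [FP.star]; rfl
    · cases u
      simp [FP.star]
  · have hiff : ∀ e : ((Fin n × PUnit) ⊕ PUnit) × ((Fin n × PUnit) ⊕ PUnit),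
        e ∈ (FP.node (FP.letter a) n (FP.letter b)).star.toLGraph.edges ↔
          ∃ k : Fin n, e = (Sum.inl (k, PUnit.unit), Sum.inr PUnit.unit) := by
      intro e
      constructor
      · intro he
        simp only [FP.star] at he
        rcases Finset.mem_union.1 he with h | h
        · rcases Finset.mem_union.1 h with h | h
          · obtain ⟨p, hp, -⟩ := Finset.mem_image.1 h
            exact absurd (Finset.mem_product.1 hp).2 (Finset.notMem_empty _)
          · obtain ⟨p, hp, -⟩ := Finset.mem_image.1 h
            exact absurd hp (Finset.notMem_empty _)
        · obtain ⟨k, -, hk⟩ := Finset.mem_image.1 h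
          exact ⟨k, hk.symm⟩
      · rintro ⟨k, rfl⟩
        apply Finset.mem_union_right
        exact Finset.mem_image.2 ⟨k, Finset.mem_univ k, rfl⟩
    intro e
    refine (hiff e).trans ?_
    constructor
    · rintro ⟨k, rfl⟩
      exact ⟨Sum.inl_ne_inr, rfl⟩
    · rintro ⟨h1, h2⟩
      obtain ⟨e1, e2⟩ := e
      simp only at h1 h2
      subst h2
      rcases e1 with ⟨k, u⟩ | u
      · cases u
        exact ⟨k, rfl⟩
      · cases u
        exact absurd rfl h1
  · rw [show (FP.node (FP.letter a) n (FP.letter b)).bracket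
        = LieExpr.iterBr (LieExpr.of a) n (LieExpr.of b) from rfl, LieExpr.letters_iterBr]
    show (List.replicate n [a]).flatten ++ [b] = _
    rw [flatten_replicate_singleton]
  · intro q
    rw [show (FP.node (FP.letter a) n (FP.letter b)).bracket
        = LieExpr.iterBr (LieExpr.of a) n (LieExpr.of b) from rfl,
      LieExpr.mem_intervals_iterBr]
    simp only [Nat.zero_add]
end Canonical


/-- **Base case of the basis theorem**: if `w₁` and `w₂` are Lyndon-Shirshov words
(with their full partitions `t₁`, `t₂`) and one of them is an `a`-simple word `aⁿb`
(`n ≥ 1`, `b ≠ a`), then the configuration pairing `⟨★(w₁), ⌊w₂⌋⟩` equals `n!` when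
`w₂ = w₁` and equals `0` otherwise. -/
theorem pairing_star_bracket_simple {A : Type*} [LinearOrder A] (t₁ t₂ : FP A)
    (hv₁ : t₁.Valid) (hv₂ : t₂.Valid)
    (hw₁ : IsLyndon t₁.word) (hw₂ : IsLyndon t₂.word) :
    (∀ (a b : A) (n : ℕ), 1 ≤ n → b ≠ a → t₁.word = List.replicate n a ++ [b] →
      pairing t₁.star.toLGraph t₂.bracket =
        if t₂.word = t₁.word then (Nat.factorial n : ℤ) else 0) ∧
    (∀ (a b : A) (n : ℕ), 1 ≤ n → b ≠ a → t₂.word = List.replicate n a ++ [b] →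
      pairing t₁.star.toLGraph t₂.bracket =
        if t₁.word = t₂.word then (Nat.factorial n : ℤ) else 0) := by
  constructor
  · intro a b n hn hba hw1
    have hab : a < b := lyndon_lt hn hba (by rw [← hw1]; exact hw₁)
    have ht₁ : t₁ = FP.node (FP.letter a) n (FP.letter b) :=
      FP.valid_word_simple a b t₁ hv₁ n hn hw1
    by_cases h : t₂.word = t₁.word
    · rw [if_pos h]
      have ht₂ : t₂ = FP.node (FP.letter a) n (FP.letter b) :=
        FP.valid_word_simple a b t₂ hv₂ n hn (h.trans hw1)
      rw [ht₁, ht₂]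
      exact pairing_canonical a b (ne_of_lt hab) n hn
    · rw [if_neg h]
      have hempty : Bijections t₁.star.toLGraph t₂.bracket = ∅ := by
        rw [Finset.eq_empty_iff_forall_notMem]
        intro σ hσ
        have hm := bij_multiset _ _ σ hσ
        rw [FP.star_labels t₁, FP.letters_bracket t₂] at hm
        have hperm : t₂.word.Perm t₁.word := (Multiset.coe_eq_coe.1 hm).symm
        have hperm2 : t₂.word.Perm (List.replicate n a ++ [b]) := by
          rw [← hw1]; exact hperm
        have := lyndon_perm_simple hab hn hw₂ hperm2
        exact h (this.trans hw1.symm)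
      rw [pairing, hempty, Finset.sum_empty]
  · intro a b n hn hba hw2
    have hab : a < b := lyndon_lt hn hba (by rw [← hw2]; exact hw₂)
    have ht₂ : t₂ = FP.node (FP.letter a) n (FP.letter b) :=
      FP.valid_word_simple a b t₂ hv₂ n hn hw2
    by_cases h : t₁.word = t₂.word
    · rw [if_pos h]
      have ht₁ : t₁ = FP.node (FP.letter a) n (FP.letter b) :=
        FP.valid_word_simple a b t₁ hv₁ n hn (h.trans hw2)
      rw [ht₁, ht₂]
      exact pairing_canonical a b (ne_of_lt hab) n hn
    · rw [if_neg h]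
      have hempty : Bijections t₁.star.toLGraph t₂.bracket = ∅ := by
        rw [Finset.eq_empty_iff_forall_notMem]
        intro σ hσ
        have hm := bij_multiset _ _ σ hσ
        rw [FP.star_labels t₁, FP.letters_bracket t₂] at hm
        have hperm : t₁.word.Perm t₂.word := Multiset.coe_eq_coe.1 hm
        have hperm2 : t₁.word.Perm (List.replicate n a ++ [b]) := by
          rw [← hw2]; exact hperm
        have := lyndon_perm_simple hab hn hw₁ hperm2
        exact h (this.trans hw2.symm)
      rw [pairing, hempty, Finset.sum_empty]
end

section
/- The left-greedy bracketings of distinct Lyndon-Shirshov words over a totally ordered alphabet are linearly independent elements of the free Lie algebra (over a field of characteristic zero, e.g. ℚ) on that alphabet. -/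
open scoped Classical

/-- Interpretation of a Lie bracket expression in the free Lie algebra over `ℚ`. -/
noncomputable def LieExpr.toLie {A : Type*} : LieExpr A → FreeLieAlgebra ℚ A
  | .of a => FreeLieAlgebra.of ℚ a
  | .br h k => ⁅h.toLie, k.toLie⁆


set_option linter.unusedSectionVars false

attribute [local instance] LieRing.ofAssociativeRing

namespace LG

section LexSep

variable {A : Type*} [LinearOrder A]

/-- `SLt u v` : there is a position inside both `u` and `v` where they first differ,
with the letter of `u` smaller. -/
def SLt (u v : List A) : Prop :=
  ∃ (p : List A) (x y : A) (s t : List A), x < y ∧ u = p ++ x :: s ∧ v = p ++ y :: t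

theorem SLt.lex {u v : List A} (h : SLt u v) : List.Lex (· < ·) u v := by
  obtain ⟨p, x, y, s, t, hxy, rfl, rfl⟩ := h
  induction p with
  | nil => exact List.Lex.rel hxy
  | cons a p ih => exact List.Lex.cons ih

theorem SLt.extend {u v u' v' : List A} (h : SLt u v) (hu : u <+: u') (hv : v <+: v') :
    SLt u' v' := by
  obtain ⟨p, x, y, s, t, hxy, rfl, rfl⟩ := h
  obtain ⟨e, rfl⟩ := hu; obtain ⟨e', rfl⟩ := hv
  exact ⟨p, x, y, s ++ e, t ++ e', hxy, by simp, by simp⟩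

theorem SLt.prepend {u v : List A} (m : List A) (h : SLt u v) : SLt (m ++ u) (m ++ v) := by
  obtain ⟨p, x, y, s, t, hxy, rfl, rfl⟩ := h
  exact ⟨m ++ p, x, y, s, t, hxy, by simp, by simp⟩

theorem SLt.irrefl (u : List A) : ¬ SLt u u := by
  rintro ⟨p, x, y, s, t, hxy, h1, h2⟩
  rw [h1] at h2
  have := List.append_cancel_left h2
  exact absurd (List.cons.inj this).1 (ne_of_lt hxy)

theorem SLt.trans {a b c : List A} (h1 : SLt a b) (h2 : SLt b c) : SLt a c := by
  obtain ⟨p, x, y, s, t, hxy, ha, hb⟩ := h1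
  obtain ⟨q, z, w, s', t', hzw, hb', hc⟩ := h2
  rw [hb] at hb'
  rcases List.append_eq_append_iff.mp hb' with ⟨a', hq, he⟩ | ⟨c', hp, he⟩
  · cases a' with
    | nil =>
      simp only [List.append_nil] at hq
      obtain ⟨rfl, rfl⟩ : y = z ∧ t = s' := by
        simpa using (List.cons.inj (by simpa using he))
      exact ⟨p, x, w, s, t', lt_trans hxy hzw, ha, by rw [hc, hq]⟩
    | cons d a'' =>
      obtain ⟨rfl, he2⟩ := List.cons.inj he
      refine ⟨p, x, y, s, a'' ++ w :: t', hxy, ha, ?_⟩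
      rw [hc, hq]; simp
  · cases c' with
    | nil =>
      simp only [List.append_nil] at hp
      obtain ⟨rfl, rfl⟩ : z = y ∧ s' = t := by
        simpa using (List.cons.inj (by simpa using he))
      exact ⟨p, x, w, s, t', lt_trans hxy hzw, ha, by rw [hc, hp]⟩
    | cons d c'' =>
      obtain ⟨rfl, he2⟩ := List.cons.inj he
      refine ⟨q, z, w, c'' ++ x :: s, t', hzw, ?_, hc⟩
      rw [ha, hp]; simp

theorem slt_total (u : List A) : ∀ v : List A, u <+: v ∨ v <+: u ∨ SLt u v ∨ SLt v u := by
  induction u with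
  | nil => intro v; exact Or.inl (List.nil_prefix)
  | cons x u ih =>
    intro v
    cases v with
    | nil => exact Or.inr (Or.inl List.nil_prefix)
    | cons y v =>
      rcases lt_trichotomy x y with h | rfl | h
      · exact Or.inr (Or.inr (Or.inl ⟨[], x, y, u, v, h, rfl, rfl⟩))
      · rcases ih v with h | h | h | h
        · exact Or.inl (List.cons_prefix_cons.mpr ⟨rfl, h⟩)
        · exact Or.inr (Or.inl (List.cons_prefix_cons.mpr ⟨rfl, h⟩))
        · exact Or.inr (Or.inr (Or.inl (by simpa using h.prepend [x])))
        · exact Or.inr (Or.inr (Or.inr (by simpa using h.prepend [x])))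
      · exact Or.inr (Or.inr (Or.inr ⟨[], y, x, v, u, h, rfl, rfl⟩))

theorem lex_iff {u v : List A} :
    List.Lex (· < ·) u v ↔ (u <+: v ∧ u ≠ v) ∨ SLt u v := by
  constructor
  · intro h
    induction h with
    | nil => exact Or.inl ⟨List.nil_prefix, by simp⟩
    | @rel a l b m hab => exact Or.inr ⟨[], a, b, l, m, hab, rfl, rfl⟩
    | @cons a l m h ih =>
      rcases ih with ⟨hp, hne⟩ | hs
      · exact Or.inl ⟨List.cons_prefix_cons.mpr ⟨rfl, hp⟩, by simpa using hne⟩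
      · exact Or.inr (by simpa using hs.prepend [a])
  · rintro (⟨⟨r, rfl⟩, hne⟩ | hs)
    · have hr : r ≠ [] := by rintro rfl; simp at hne
      clear hne
      induction u with
      | nil =>
        cases r with
        | nil => exact absurd rfl hr
        | cons a l => exact List.Lex.nil
      | cons a u ih => exact List.Lex.cons ih
    · exact hs.lex

theorem SLt.unprepend {m u v : List A} (h : SLt (m ++ u) (m ++ v)) : SLt u v := by
  induction m with
  | nil => simpa using h
  | cons a m ih =>
    apply ih
    obtain ⟨p, x, y, s, t, hxy, h1, h2⟩ := h
    cases p with
    | nil =>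
      simp only [List.nil_append] at h1 h2
      have e1 := (List.cons.inj h1).1
      have e2 := (List.cons.inj h2).1
      rw [← e1, ← e2] at hxy
      exact absurd hxy (lt_irrefl a)
    | cons b p =>
      obtain ⟨rfl, h1'⟩ := List.cons.inj h1
      obtain ⟨-, h2'⟩ := List.cons.inj h2
      exact ⟨p, x, y, s, t, hxy, h1', h2'⟩

theorem lex_unprepend {m u v : List A} (h : List.Lex (· < ·) (m ++ u) (m ++ v)) :
    List.Lex (· < ·) u v := by
  rcases lex_iff.mp h with ⟨hp, hne⟩ | hs
  · exact lex_iff.mpr (Or.inl ⟨(List.prefix_append_right_inj m).mp hp,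
      fun e => hne (by rw [e])⟩)
  · exact hs.unprepend.lex

theorem slt_of_lex_ge {u v : List A} (h : List.Lex (· < ·) u v) (hl : v.length ≤ u.length) :
    SLt u v := by
  rcases lex_iff.mp h with ⟨hp, hne⟩ | hs
  · exact absurd (hp.eq_of_length (le_antisymm hp.length_le hl)) hne
  · exact hs

theorem slt_of_lex_append_right {x t s s' : List A}
    (h : List.Lex (· < ·) (x ++ s) (t ++ s')) (hl : x.length = t.length) :
    SLt x t ∨ x = t := by
  rcases lex_iff.mp h with ⟨hp, -⟩ | hs
  · right
    have h1 : x <+: t ++ s' := (List.prefix_append x s).trans hp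
    have h2 : x <+: t := List.prefix_of_prefix_length_le h1 (List.prefix_append t s') hl.le
    exact h2.eq_of_length hl
  · obtain ⟨p, a, b, r, r', hab, h1, h2⟩ := hs
    by_cases hpl : x.length ≤ p.length
    · right
      have hx : x = List.take x.length (p ++ a :: r) := by rw [← h1, List.take_left]
      have ht : t = List.take x.length (p ++ b :: r') := by rw [← h2, hl, List.take_left]
      rw [List.take_append_of_le_length hpl] at hx ht
      exact hx.trans ht.symm
    · left
      push_neg at hpl
      have hpx : p <+: x := by
        refine List.prefix_of_prefix_length_le ?_ (List.prefix_append x s) hpl.le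
        rw [h1]; exact List.prefix_append p _
      obtain ⟨d, rfl⟩ := hpx
      have hd : d ≠ [] := by
        rintro rfl; simp at hpl
      cases d with
      | nil => exact absurd rfl hd
      | cons a' d' =>
        have h1' : a' :: (d' ++ s) = a :: r := by
          have := h1; simp only [List.append_assoc] at this
          simpa using List.append_cancel_left this
        obtain ⟨rfl, -⟩ := List.cons.inj h1'
        -- now t : |t| = |p| + (d'.length + 1) ; t = p ++ b :: t'
        have hpt : p <+: t := by
          refine List.prefix_of_prefix_length_le ?_ (List.prefix_append t s') ?_
          · rw [h2]; exact List.prefix_append p _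
          · omega
        obtain ⟨e, rfl⟩ := hpt
        cases e with
        | nil => exfalso; simp at hl
        | cons b' e' =>
          have h2' : b' :: (e' ++ s') = b :: r' := by
            have := h2; simp only [List.append_assoc] at this
            simpa using List.append_cancel_left this
          have hbe := (List.cons.inj h2').1
          refine ⟨p, a', b', d', e', ?_, rfl, rfl⟩
          rw [hbe]; exact hab

end LexSep


section Lyndon

variable {A : Type*} [LinearOrder A]

theorem lyndon_singleton (x : A) : IsLyndon [x] := by
  refine ⟨by simp, ?_⟩
  intro u v hu hv he
  exfalso
  have := congrArg List.length he
  simp only [List.length_cons, List.length_nil, List.length_append] at this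
  have hu' := List.length_pos_iff.mpr hu
  have hv' := List.length_pos_iff.mpr hv
  omega

theorem lyndon_rot {w u v : List A} (hw : IsLyndon w) (hu : u ≠ []) (hv : v ≠ [])
    (he : w = u ++ v) : List.Lex (· < ·) w (v ++ u) :=
  hw.2 u v hu hv he

theorem lyndon_slt_suffix {w x s : List A} (hw : IsLyndon w) (he : w = x ++ s)
    (hx : x ≠ []) (hs : s ≠ []) : SLt w s := by
  have h1 : List.Lex (· < ·) w (s ++ x) := lyndon_rot hw hx hs he
  rcases slt_total w s with hp | hp | hsep | hsep
  · exfalso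
    have hle := hp.length_le
    rw [he] at hle
    simp only [List.length_append] at hle
    have := List.length_pos_iff.mpr hx
    omega
  · obtain ⟨t, ht⟩ := hp
    have htne : t ≠ [] := by
      rintro rfl
      rw [List.append_nil] at ht
      rw [← ht] at he
      have := congrArg List.length he
      simp only [List.length_append] at this
      have := List.length_pos_iff.mpr hx
      omega
    have h2 : List.Lex (· < ·) w (t ++ s) := lyndon_rot hw hs htne ht.symm
    have h3 : List.Lex (· < ·) t x := by
      apply lex_unprepend (m := s)
      rw [ht]; exact h1
    have hlen : x.length = t.length := by
      have e1 := congrArg List.length he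
      have e2 := congrArg List.length ht
      simp only [List.length_append] at e1 e2
      omega
    have h4 : SLt x t ∨ x = t := by
      apply slt_of_lex_append_right (s := s) (s' := s) _ hlen
      rw [← he]; exact h2
    rcases h4 with h4 | rfl
    · exact absurd (show (t:List A) < x from h3) (lt_asymm (show (x:List A) < t from h4.lex))
    · exact absurd (show (x:List A) < x from h3) (lt_irrefl x)
  · exact hsep
  · exfalso
    have h5 : SLt (s ++ x) w := hsep.extend (List.prefix_append s x) (List.prefix_refl w)
    exact absurd (lt_trans (show (w:List A) < s ++ x from h1) (show (s++x : List A) < w from h5.lex))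
      (lt_irrefl w)

theorem lyndon_cat {x y : List A} (hx : IsLyndon x) (hy : IsLyndon y)
    (hxy : List.Lex (· < ·) x y) : IsLyndon (x ++ y) := by
  have hxne := hx.1; have hyne := hy.1
  have key : List.Lex (· < ·) (x ++ y) y := by
    rcases lex_iff.mp hxy with ⟨⟨r, rfl⟩, hne⟩ | hs
    · have hr : r ≠ [] := by rintro rfl; simp at hne
      have hsr : SLt (x ++ r) r := lyndon_slt_suffix hy rfl hxne hr
      exact List.Lex.append_left _ hsr.lex x
    · exact (hs.extend (List.prefix_append x y) (List.prefix_refl y)).lex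
  have key2 : List.Lex (· < ·) (x ++ y) (y ++ x) := by
    rcases lex_iff.mp hxy with ⟨⟨r, rfl⟩, hne⟩ | hs
    · have hr : r ≠ [] := by rintro rfl; simp at hne
      have hsr : SLt (x ++ r) r := lyndon_slt_suffix hy rfl hxne hr
      have h5 : SLt (x ++ (x ++ r)) (x ++ (r ++ x)) :=
        (hsr.extend (List.prefix_refl _) (List.prefix_append r x)).prepend x
      have := h5.lex
      simpa [List.append_assoc] using this
    · exact (hs.extend (List.prefix_append x y) (List.prefix_append y x)).lex
  refine ⟨by simp [hxne], ?_⟩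
  intro u v hu hv he
  rcases List.append_eq_append_iff.mp he with ⟨a', hu', hy'⟩ | ⟨c', hx', hv'⟩
  · by_cases ha : a' = []
    · subst ha
      rw [List.append_nil] at hu'
      rw [List.nil_append] at hy'
      rw [hu', ← hy']
      exact key2
    · have hsep : SLt y v := lyndon_slt_suffix hy hy' ha hv
      have h6 : List.Lex (· < ·) y (v ++ u) :=
        (hsep.extend (List.prefix_refl y) (List.prefix_append v u)).lex
      exact lt_trans (show (x++y : List A) < y from key) (show (y : List A) < v ++ u from h6)
  · by_cases hc : c' = []
    · subst hc
      rw [List.append_nil] at hx'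
      rw [List.nil_append] at hv'
      rw [hv', ← hx']
      exact key2
    · have hsep : SLt x c' := lyndon_slt_suffix hx hx' hu hc
      have h7 : SLt (x ++ y) (c' ++ (y ++ u)) :=
        hsep.extend (List.prefix_append x y) (List.prefix_append c' (y ++ u))
      have := h7.lex
      rw [hv']
      simpa [List.append_assoc] using this

theorem lyndon_iter {b u : List A} (hb : IsLyndon b) (hu : IsLyndon u)
    (hlt : List.Lex (· < ·) b u) :
    ∀ j, IsLyndon ((List.replicate j b).flatten ++ u) := by
  intro j
  induction j with
  | zero => simpa using hu
  | succ j ih =>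
    have hstep : IsLyndon (b ++ ((List.replicate j b).flatten ++ u)) := by
      apply lyndon_cat hb ih
      cases j with
      | zero => simpa using hlt
      | succ j' =>
        apply lex_iff.mpr
        left
        constructor
        · rw [List.replicate_succ, List.flatten_cons, List.append_assoc]
          exact List.prefix_append b _
        · intro hcontra
          have := congrArg List.length hcontra
          rw [List.replicate_succ, List.flatten_cons] at this
          simp only [List.length_append] at this
          have := List.length_pos_iff.mpr hu.1
          omega
    rw [List.replicate_succ, List.flatten_cons, List.append_assoc]
    exact hstep

end Lyndon

section FPLemmas

variable {A : Type*} [LinearOrder A]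

open FP

/-- size of an FP tree -/
def sizeF {A : Type*} : FP A → ℕ
  | .letter _ => 1
  | .node c _ v => sizeF c + sizeF v + 1

theorem sizeF_pos {A : Type*} (t : FP A) : 1 ≤ sizeF t := by
  cases t <;> simp [sizeF]

theorem word_ne_nil : ∀ t : FP A, t.word ≠ []
  | .letter x => by simp [FP.word]
  | .node α n χ => by
    have h := word_ne_nil χ
    simp only [FP.word, ne_eq, List.append_eq_nil_iff]
    rintro ⟨-, h2⟩
    exact h h2

theorem word_node (α : FP A) (n : ℕ) (χ : FP A) :
    (FP.node α n χ).word = (List.replicate n α.word).flatten ++ χ.word := rfl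

theorem word_letter (x : A) : (FP.letter x).word = [x] := rfl

theorem flatten_rep_single {α : Type*} (j : ℕ) (a : α) :
    (List.replicate j [a]).flatten = List.replicate j a := by
  induction j with
  | zero => simp
  | succ j ih => simp [List.replicate_succ, ih]

theorem flatten_rep_ne {l : List A} {m : ℕ} (hm : 1 ≤ m) (hl : l ≠ []) :
    (List.replicate m l).flatten ≠ [] := by
  obtain ⟨m', rfl⟩ : ∃ m', m = m' + 1 := ⟨m - 1, by omega⟩
  simp only [List.replicate_succ, List.flatten_cons, ne_eq, List.append_eq_nil_iff]
  rintro ⟨h, -⟩; exact hl h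

theorem base_word_prefix {c v : FP A} {m : ℕ} (hm : 1 ≤ m) :
    c.word <+: (FP.node c m v).word := by
  obtain ⟨m', rfl⟩ : ∃ m', m = m' + 1 := ⟨m - 1, by omega⟩
  rw [word_node, List.replicate_succ, List.flatten_cons, List.append_assoc]
  exact List.prefix_append _ _

theorem base_isBlock {c : FP A} {m : ℕ} {v : FP A} (hb : (FP.node c m v).Valid) :
    IsBlock c (FP.node c m v) := by
  obtain ⟨hc, hm, hbu, hne⟩ := hb
  cases c with
  | letter a =>
    obtain ⟨x, rfl⟩ := hbu
    exact Or.inl ⟨m, x, hm, rfl, fun h => hne (by rw [h])⟩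
  | node c' m' v' => exact Or.inl ⟨m, v, hm, rfl, hbu, hne⟩

theorem block_valid : ∀ (c u : FP A), c.Valid → IsBlock c u → u.Valid := by
  intro c
  induction c with
  | letter a =>
    intro u _ h
    rcases h with ⟨j, x, hj, rfl, hx⟩ | ⟨x, rfl, hx⟩
    · exact ⟨trivial, hj, ⟨x, rfl⟩, fun e => hx (by injection e)⟩
    · trivial
  | node c' m' v' ihc _ =>
    intro u hc h
    rcases h with ⟨j, u₂, hj, rfl, hb, hne⟩ | ⟨hb, hne⟩
    · exact ⟨hc, hj, hb, hne⟩
    · exact ihc u hc.1 hb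

theorem repl_prefix {α : Type*} (a : α) :
    ∀ (j k : ℕ) (x y : α), x ≠ a → y ≠ a →
      (List.replicate j a ++ [x]) <+: (List.replicate k a ++ [y]) → j = k ∧ x = y := by
  intro j
  induction j with
  | zero =>
    intro k x y hx _ h
    cases k with
    | zero =>
      simp only [List.replicate, List.nil_append] at h
      exact ⟨rfl, (List.cons_prefix_cons.mp h).1⟩
    | succ k =>
      exfalso
      rw [List.replicate_succ] at h
      simp only [List.replicate, List.nil_append, List.cons_append] at h
      exact hx (List.cons_prefix_cons.mp h).1
  | succ j ih =>
    intro k x y hx hy h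
    cases k with
    | zero =>
      exfalso
      have := h.length_le
      simp [List.replicate_succ] at this
    | succ k =>
      rw [List.replicate_succ, List.replicate_succ, List.cons_append, List.cons_append] at h
      obtain ⟨-, h2⟩ := List.cons_prefix_cons.mp h
      obtain ⟨h3, h4⟩ := ih k x y hx hy h2
      exact ⟨by omega, h4⟩

theorem code_prefix (P : FP A → Prop)
    (hpf : ∀ X Y, P X → P Y → X.word <+: Y.word → X = Y) :
    ∀ (s s' : List (FP A)), (∀ X ∈ s, P X) → (∀ X ∈ s', P X) →
      ((s.map FP.word).flatten <+: (s'.map FP.word).flatten) → s <+: s' := by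
  intro s
  induction s with
  | nil => intro s' _ _ _; exact List.nil_prefix
  | cons X rest ih =>
    intro s' hs hs' h
    cases s' with
    | nil =>
      exfalso
      simp only [List.map_cons, List.flatten_cons, List.map_nil, List.flatten_nil,
        List.prefix_nil, List.append_eq_nil_iff] at h
      exact word_ne_nil X h.1
    | cons X' rest' =>
      simp only [List.map_cons, List.flatten_cons] at h
      have c1 : X.word <+: X'.word ∨ X'.word <+: X.word :=
        List.prefix_or_prefix_of_prefix ((List.prefix_append _ _).trans h)
          (List.prefix_append _ _)
      have hXX : X = X' := by
        rcases c1 with c | c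
        · exact hpf X X' (hs X (by simp)) (hs' X' (by simp)) c
        · exact (hpf X' X (hs' X' (by simp)) (hs X (by simp)) c).symm
      subst hXX
      have h2 := (List.prefix_append_right_inj X.word).mp h
      have := ih rest' (fun Y hY => hs Y (by simp [hY])) (fun Y hY => hs' Y (by simp [hY])) h2
      exact List.cons_prefix_cons.mpr ⟨rfl, this⟩

theorem word_node_as_map (b u : FP A) (j : ℕ) :
    (FP.node b j u).word = (((List.replicate j b ++ [u]).map FP.word).flatten) := by
  rw [word_node]
  simp [List.map_replicate]

theorem blocks_pf : ∀ (b : FP A), b.Valid → ∀ B B', IsBlock b B → IsBlock b B' →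
    B.word <+: B'.word → B = B' := by
  intro b
  induction b with
  | letter a =>
    intro _ B B' hB hB' hpre
    rcases hB with ⟨j, x, hj, rfl, hx⟩ | ⟨x, rfl, hx⟩ <;>
      rcases hB' with ⟨k, y, hk, rfl, hy⟩ | ⟨y, rfl, hy⟩
    · rw [word_node, word_node, word_letter, word_letter, flatten_rep_single,
        flatten_rep_single] at hpre
      obtain ⟨rfl, rfl⟩ := repl_prefix a j k x y hx hy hpre
      rfl
    · exfalso
      have := hpre.length_le
      simp [word_node, word_letter, flatten_rep_single, FP.word] at this
      omega
    · exfalso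
      rw [word_letter, word_node, word_letter, flatten_rep_single] at hpre
      obtain ⟨k', rfl⟩ : ∃ k', k = k' + 1 := ⟨k - 1, by omega⟩
      rw [List.replicate_succ, List.cons_append] at hpre
      exact hx (List.cons_prefix_cons.mp hpre).1
    · rw [word_letter, word_letter] at hpre
      obtain ⟨e, -⟩ := List.cons_prefix_cons.mp hpre
      rw [e]
  | node c m v ihc _ =>
    intro hb B B' hB hB' hpre
    have hvc : c.Valid := hb.1
    have hcode := code_prefix (P := IsBlock c) (fun X Y hX hY h => ihc hvc X Y hX hY h)
    have hbc : IsBlock c (FP.node c m v) := base_isBlock hb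
    rcases hB with ⟨j, u, hj, rfl, hu, hune⟩ | ⟨hBc, hBne⟩ <;>
      rcases hB' with ⟨k, u', hk, rfl, hu', hu'ne⟩ | ⟨hB'c, hB'ne⟩
    · rw [word_node_as_map, word_node_as_map] at hpre
      have hseq := hcode (List.replicate j (FP.node c m v) ++ [u])
        (List.replicate k (FP.node c m v) ++ [u'])
        (by intro X hX
            rcases List.mem_append.mp hX with h | h
            · rw [List.eq_of_mem_replicate h]; exact hbc
            · rw [List.mem_singleton.mp h]; exact hu)
        (by intro X hX
            rcases List.mem_append.mp hX with h | h
            · rw [List.eq_of_mem_replicate h]; exact hbc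
            · rw [List.mem_singleton.mp h]; exact hu')
        hpre
      obtain ⟨rfl, rfl⟩ := repl_prefix (FP.node c m v) j k u u' hune hu'ne hseq
      rfl
    · -- B = node b j u, B' collapsed
      exfalso
      rw [word_node_as_map] at hpre
      have hseq := hcode (List.replicate j (FP.node c m v) ++ [u]) [B']
        (by intro X hX
            rcases List.mem_append.mp hX with h | h
            · rw [List.eq_of_mem_replicate h]; exact hbc
            · rw [List.mem_singleton.mp h]; exact hu)
        (by intro X hX; rw [List.mem_singleton.mp hX]; exact hB'c)
        (by simpa using hpre)
      have := hseq.length_le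
      simp at this
      omega
    · -- B collapsed, B' node
      exfalso
      rw [word_node_as_map] at hpre
      have hseq := hcode [B] (List.replicate k (FP.node c m v) ++ [u'])
        (by intro X hX; rw [List.mem_singleton.mp hX]; exact hBc)
        (by intro X hX
            rcases List.mem_append.mp hX with h | h
            · rw [List.eq_of_mem_replicate h]; exact hbc
            · rw [List.mem_singleton.mp h]; exact hu')
        (by simpa using hpre)
      obtain ⟨k', rfl⟩ : ∃ k', k = k' + 1 := ⟨k - 1, by omega⟩
      rw [List.replicate_succ, List.cons_append] at hseq
      exact hBne (List.cons_prefix_cons.mp hseq).1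
    · exact ihc hvc B B' hBc hB'c hpre

/-- `u` occurs in `w` at a strictly positive position. -/
def OccAt (w u : List A) : Prop := ∃ x y, w = x ++ u ++ y ∧ x ≠ []

theorem occ_not_slt {w u : List A} (hw : IsLyndon w) (ho : OccAt w u) (hune : u ≠ []) :
    ¬ SLt u w := by
  obtain ⟨x, y, he, hx⟩ := ho
  intro hs
  have h1 : List.Lex (· < ·) w ((u ++ y) ++ x) :=
    lyndon_rot hw hx (by simp [hune]) (by rw [he, List.append_assoc])
  have h2 : SLt ((u ++ y) ++ x) w :=
    hs.extend ⟨y ++ x, by simp⟩ (List.prefix_refl w)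
  exact absurd (lt_trans (show (w : List A) < (u ++ y) ++ x from h1)
    (show ((u ++ y) ++ x : List A) < w from h2.lex)) (lt_irrefl w)

theorem slt_level {w : List A} (hw : IsLyndon w) {c b' u' : FP A} (hvc : c.Valid)
    (hb : IsBlock c b') (hu : IsBlock c u') (hne : u' ≠ b') (hpre : b'.word <+: w)
    (ho : OccAt w u'.word) : SLt b'.word u'.word := by
  rcases slt_total b'.word u'.word with hp | hp | hs | hs
  · exact absurd (blocks_pf c hvc b' u' hb hu hp).symm hne
  · exact absurd (blocks_pf c hvc u' b' hu hb hp) hne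
  · exact hs
  · exfalso
    have : SLt u'.word w := hs.extend (List.prefix_refl _) hpre
    exact occ_not_slt hw ho (word_ne_nil u') this

theorem slt_letter_head {w : List A} (hw : IsLyndon w) {a x : A}
    (hpre : [a] <+: w) (ho : OccAt w [x]) (hne : x ≠ a) : a < x := by
  rcases lt_trichotomy x a with h | h | h
  · exfalso
    have hs : SLt [x] [a] := ⟨[], x, a, [], [], h, rfl, rfl⟩
    exact occ_not_slt hw ho (by simp) (hs.extend (List.prefix_refl _) hpre)
  · exact absurd h hne
  · exact h

end FPLemmas

section Main

variable {A : Type*} [LinearOrder A]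

/-- the comparison conditions needed at every node of an FP tree -/
def Ok {A : Type*} [LinearOrder A] : FP A → Prop
  | .letter _ => True
  | .node α _ χ => Ok α ∧ Ok χ ∧ List.Lex (· < ·) (α.word ++ χ.word) (χ.word ++ α.word)

theorem mainInd {w : List A} (hw : IsLyndon w) : ∀ N : ℕ,
    (∀ b : FP A, sizeF b ≤ N → b.Valid → b.word <+: w → IsLyndon b.word ∧ Ok b) ∧
    (∀ b B : FP A, sizeF b + sizeF B ≤ N → b.Valid → b.word <+: w → FP.IsBlock b B →
      OccAt w B.word → IsLyndon B.word ∧ Ok B) := by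
  intro N
  induction N using Nat.strong_induction_on with
  | _ N IH =>
  constructor
  · intro b hbN hvb hpre
    cases b with
    | letter x => exact ⟨lyndon_singleton x, trivial⟩
    | node c m v =>
      obtain ⟨hc, hm, hbu, hne⟩ := hvb
      have hszc : sizeF c < N := by
        have := sizeF_pos v; simp only [sizeF] at hbN; omega
      have hcw : c.word <+: w := (base_word_prefix hm).trans hpre
      have hPc := (IH _ hszc).1 c le_rfl hc hcw
      have hoccv : OccAt w v.word := by
        obtain ⟨r, hr⟩ := hpre
        refine ⟨(List.replicate m c.word).flatten, r, ?_,
          flatten_rep_ne hm (word_ne_nil c)⟩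
        rw [← hr, word_node]
      have hstep : IsLyndon v.word ∧ Ok v ∧ SLt c.word v.word := by
        cases c with
        | letter a =>
          obtain ⟨xx, rfl⟩ := hbu
          have hxa : xx ≠ a := fun h => hne (by rw [h])
          have hax : a < xx := slt_letter_head hw hcw hoccv hxa
          exact ⟨lyndon_singleton xx, trivial, ⟨[], a, xx, [], [], hax, rfl, rfl⟩⟩
        | node c' m' v' =>
          have hvb' : FP.IsBlock c' v := hbu
          have hc'w : c'.word <+: w := (base_word_prefix hc.2.1).trans hcw
          have hlt2 : sizeF c' + sizeF v < N := by
            have := sizeF_pos v'; simp only [sizeF] at hbN; omega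
          have hP2 := (IH _ hlt2).2 c' v le_rfl hc.1 hc'w hvb' hoccv
          have hsep : SLt (FP.node c' m' v').word v.word :=
            slt_level hw hc.1 (base_isBlock hc) hvb' hne hcw hoccv
          exact ⟨hP2.1, hP2.2, hsep⟩
      obtain ⟨hLv, hOkv, hsep⟩ := hstep
      exact ⟨lyndon_iter hPc.1 hLv hsep.lex m,
        hPc.2, hOkv, (hsep.extend (List.prefix_append _ _) (List.prefix_append _ _)).lex⟩
  · intro b B hN hvb hpre hB hocc
    cases b with
    | letter a =>
      rcases hB with ⟨j, x, hj, rfl, hxa⟩ | ⟨x, rfl, hxa⟩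
      · have hoccx : OccAt w [x] := by
          obtain ⟨X, Y, he, hX⟩ := hocc
          refine ⟨X ++ (List.replicate j ([a] : List A)).flatten, Y, ?_, by simp [hX]⟩
          rw [he, word_node, word_letter, word_letter]
          simp [List.append_assoc]
        have hax : a < x := slt_letter_head hw hpre hoccx hxa
        refine ⟨lyndon_iter (lyndon_singleton a) (lyndon_singleton x) (List.Lex.rel hax) j,
          trivial, trivial, ?_⟩
        exact List.Lex.rel hax
      · exact ⟨lyndon_singleton x, trivial⟩
    | node c m v =>
      have hvc : c.Valid := hvb.1
      have hcw : c.word <+: w := (base_word_prefix hvb.2.1).trans hpre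
      rcases hB with ⟨j, u, hj, rfl, hu, hune⟩ | ⟨hBc, hBne⟩
      · have hszb : sizeF (FP.node c m v) < N := by
          have := sizeF_pos u; simp only [sizeF] at hN ⊢; omega
        have hPb := (IH _ hszb).1 (FP.node c m v) le_rfl hvb hpre
        have hoccu : OccAt w u.word := by
          obtain ⟨X, Y, he, hX⟩ := hocc
          refine ⟨X ++ (List.replicate j (FP.node c m v).word).flatten, Y, ?_, by simp [hX]⟩
          rw [he, word_node]
          simp [List.append_assoc]
        have hltcu : sizeF c + sizeF u < N := by
          simp only [sizeF] at hN; omega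
        have hPu := (IH _ hltcu).2 c u le_rfl hvc hcw hu hoccu
        have hsep : SLt (FP.node c m v).word u.word :=
          slt_level hw hvc (base_isBlock hvb) hu hune hpre hoccu
        exact ⟨lyndon_iter hPb.1 hPu.1 hsep.lex j,
          hPb.2, hPu.2, (hsep.extend (List.prefix_append _ _) (List.prefix_append _ _)).lex⟩
      · have hszcB : sizeF c + sizeF B < N := by
          have := sizeF_pos v; simp only [sizeF] at hN; omega
        exact (IH _ hszcB).2 c B le_rfl hvc hcw hBc hocc

theorem main_ok {t : FP A} (hv : t.Valid) (hl : IsLyndon t.word) : Ok t := by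
  cases t with
  | letter x => trivial
  | node α n χ =>
    obtain ⟨hα, hn, hbu, hne⟩ := hv
    have hpre : α.word <+: (FP.node α n χ).word := base_word_prefix hn
    have hoccχ : OccAt (FP.node α n χ).word χ.word := by
      refine ⟨(List.replicate n α.word).flatten, [], ?_, flatten_rep_ne hn (word_ne_nil α)⟩
      rw [word_node]; simp
    have hP1 := (mainInd hl (sizeF α)).1 α le_rfl hα hpre
    cases α with
    | letter a =>
      obtain ⟨x, rfl⟩ := hbu
      have hxa : x ≠ a := fun h => hne (by rw [h])
      have hax : a < x := slt_letter_head hl hpre hoccχ hxa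
      exact ⟨trivial, trivial, List.Lex.rel hax⟩
    | node c m v =>
      have hcw : c.word <+: (FP.node (FP.node c m v) n χ).word :=
        (base_word_prefix hα.2.1).trans hpre
      have hP2 := (mainInd hl (sizeF c + sizeF χ)).2 c χ le_rfl hα.1 hcw hbu hoccχ
      have hsep := slt_level hl hα.1 (base_isBlock hα) hbu hne hpre hoccχ
      exact ⟨hP1.2, hP2.2, (hsep.extend (List.prefix_append _ _) (List.prefix_append _ _)).lex⟩

end Main

section Algebra

variable {A : Type*} [LinearOrder A]

/-- the analogue of `Ok` for Lie bracket expressions -/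
def OkE {A : Type*} [LinearOrder A] : LieExpr A → Prop
  | .of _ => True
  | .br h k => OkE h ∧ OkE k ∧
      List.Lex (· < ·) (h.letters ++ k.letters) (k.letters ++ h.letters)

theorem letters_iterBr (L : LieExpr A) (K : LieExpr A) :
    ∀ n, (LieExpr.iterBr L n K).letters = (List.replicate n L.letters).flatten ++ K.letters := by
  intro n
  induction n with
  | zero => simp [LieExpr.iterBr]
  | succ n ih =>
    rw [LieExpr.iterBr]
    show L.letters ++ (LieExpr.iterBr L n K).letters = _
    rw [ih, List.replicate_succ, List.flatten_cons, List.append_assoc]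

theorem bracket_letters : ∀ t : FP A, t.bracket.letters = t.word
  | .letter x => rfl
  | .node α n χ => by
    rw [FP.bracket, letters_iterBr, bracket_letters α, bracket_letters χ, word_node]

theorem flatten_rep_comm {α : Type*} (n : ℕ) (l : List α) :
    l ++ (List.replicate n l).flatten = (List.replicate n l).flatten ++ l := by
  induction n with
  | zero => simp
  | succ n ih => rw [List.replicate_succ, List.flatten_cons, List.append_assoc, ih,
      ← List.append_assoc]

theorem okE_iter {L K : LieExpr A} (hL : OkE L) (hK : OkE K)
    (hlex : List.Lex (· < ·) (L.letters ++ K.letters) (K.letters ++ L.letters)) :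
    ∀ n, OkE (LieExpr.iterBr L n K) := by
  intro n
  induction n with
  | zero => exact hK
  | succ n ih =>
    refine ⟨hL, ih, ?_⟩
    rw [letters_iterBr]
    have e1 : L.letters ++ ((List.replicate n L.letters).flatten ++ K.letters)
        = (List.replicate n L.letters).flatten ++ (L.letters ++ K.letters) := by
      rw [← List.append_assoc, flatten_rep_comm, List.append_assoc]
    have e2 : ((List.replicate n L.letters).flatten ++ K.letters) ++ L.letters
        = (List.replicate n L.letters).flatten ++ (K.letters ++ L.letters) := by
      rw [List.append_assoc]
    rw [e1, e2]
    exact List.Lex.append_left _ hlex _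

theorem ok_okE : ∀ t : FP A, Ok t → OkE t.bracket
  | .letter x, _ => trivial
  | .node α n χ, h => by
    obtain ⟨h1, h2, h3⟩ := h
    rw [FP.bracket]
    refine okE_iter (ok_okE α h1) (ok_okE χ h2) ?_ n
    rw [bracket_letters, bracket_letters]
    exact h3

/-- the image of a Lie bracket expression inside the monoid algebra of the free monoid -/
noncomputable def psi : LieExpr A → MonoidAlgebra ℚ (FreeMonoid A)
  | .of a => MonoidAlgebra.single (FreeMonoid.of a) 1
  | .br h k => psi h * psi k - psi k * psi h

theorem coeff_mul (f g : MonoidAlgebra ℚ (FreeMonoid A)) (X Y : FreeMonoid A)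
    (hf : ∀ m ∈ f.coeff.support, (FreeMonoid.toList m).length = (FreeMonoid.toList X).length) :
    (f * g).coeff (X * Y) = f.coeff X * g.coeff Y := by
  classical
  rw [MonoidAlgebra.mul_apply, Finsupp.sum]
  rw [Finset.sum_eq_single X]
  · rw [Finsupp.sum, Finset.sum_eq_single Y]
    · simp
    · intro b _ hbne
      rw [if_neg]
      intro h
      apply hbne
      have := congrArg FreeMonoid.toList h
      rw [FreeMonoid.toList_mul, FreeMonoid.toList_mul] at this
      have h2 := List.append_cancel_left this
      rw [← FreeMonoid.ofList_toList b, h2, FreeMonoid.ofList_toList]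
    · intro hY
      rw [if_pos rfl, Finsupp.notMem_support_iff.mp hY, mul_zero]
  · intro b hb hbne
    rw [Finsupp.sum]
    apply Finset.sum_eq_zero
    intro c _
    rw [if_neg]
    intro h
    apply hbne
    have := congrArg FreeMonoid.toList h
    rw [FreeMonoid.toList_mul, FreeMonoid.toList_mul] at this
    have h2 := (List.append_inj this (hf b hb)).1
    rw [← FreeMonoid.ofList_toList b, h2, FreeMonoid.ofList_toList]
  · intro hX
    rw [Finsupp.sum]
    apply Finset.sum_eq_zero
    intro c _
    rw [Finsupp.notMem_support_iff.mp hX, zero_mul, ite_self]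

theorem psi_spec : ∀ (L : LieExpr A), OkE L →
    (∀ m ∈ (psi L).coeff.support, (FreeMonoid.toList m).length = L.letters.length ∧
      (FreeMonoid.toList m = L.letters ∨ List.Lex (· < ·) L.letters (FreeMonoid.toList m))) ∧
    (psi L).coeff (FreeMonoid.ofList L.letters) = 1
  | .of a, _ => by
    constructor
    · intro m hm
      have hm' : m ∈ (Finsupp.single (FreeMonoid.of a) (1:ℚ)).support := hm
      rw [Finsupp.support_single_ne_zero _ (one_ne_zero (α := ℚ))] at hm'
      rw [Finset.mem_singleton.mp hm']
      exact ⟨rfl, Or.inl rfl⟩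
    · show (Finsupp.single (FreeMonoid.of a) (1:ℚ)) (FreeMonoid.ofList [a]) = 1
      exact Finsupp.single_eq_same
  | .br h k, hok => by
    obtain ⟨hOh, hOk', hlex⟩ := hok
    obtain ⟨hsupH, hcoefH⟩ := psi_spec h hOh
    obtain ⟨hsupK, hcoefK⟩ := psi_spec k hOk'
    have hlet : (LieExpr.br h k).letters = h.letters ++ k.letters := rfl
    have S1 : ∀ m ∈ (psi h * psi k).coeff.support,
        (FreeMonoid.toList m).length = (h.letters ++ k.letters).length ∧
        (FreeMonoid.toList m = h.letters ++ k.letters ∨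
          List.Lex (· < ·) (h.letters ++ k.letters) (FreeMonoid.toList m)) := by
      intro m hm
      obtain ⟨u, hu, v, hv, rfl⟩ := Finset.mem_mul.mp (MonoidAlgebra.support_coeff_mul_subset _ _ hm)
      obtain ⟨hul, hux⟩ := hsupH u hu
      obtain ⟨hvl, hvy⟩ := hsupK v hv
      rw [FreeMonoid.toList_mul]
      refine ⟨by simp [hul, hvl], ?_⟩
      rcases hux with he | hlt
      · rcases hvy with he' | hlt'
        · left; rw [he, he']
        · right; rw [he]; exact List.Lex.append_left _ hlt' _
      · right
        have hsep : SLt h.letters (FreeMonoid.toList u) := slt_of_lex_ge hlt (le_of_eq hul)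
        exact (hsep.extend (List.prefix_append _ _) (List.prefix_append _ _)).lex
    have S2 : ∀ m ∈ (psi k * psi h).coeff.support,
        (FreeMonoid.toList m).length = (h.letters ++ k.letters).length ∧
        List.Lex (· < ·) (h.letters ++ k.letters) (FreeMonoid.toList m) := by
      intro m hm
      obtain ⟨v, hv, u, hu, rfl⟩ := Finset.mem_mul.mp (MonoidAlgebra.support_coeff_mul_subset _ _ hm)
      obtain ⟨hvl, hvy⟩ := hsupK v hv
      obtain ⟨hul, hux⟩ := hsupH u hu
      rw [FreeMonoid.toList_mul]
      refine ⟨by simp [hul, hvl]; omega, ?_⟩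
      rcases hvy with he' | hlt'
      · rw [he']
        rcases hux with he | hlt
        · rw [he]; exact hlex
        · have hsep : SLt h.letters (FreeMonoid.toList u) := slt_of_lex_ge hlt (le_of_eq hul)
          have h6 : List.Lex (· < ·) (k.letters ++ h.letters)
              (k.letters ++ FreeMonoid.toList u) := (hsep.prepend k.letters).lex
          exact lt_trans (show (h.letters ++ k.letters : List A) < _ from hlex) h6
      · have hsep : SLt k.letters (FreeMonoid.toList v) := slt_of_lex_ge hlt' (le_of_eq hvl)
        have h6 : List.Lex (· < ·) (k.letters ++ h.letters)
            (FreeMonoid.toList v ++ FreeMonoid.toList u) :=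
          (hsep.extend (List.prefix_append _ _) (List.prefix_append _ _)).lex
        exact lt_trans (show (h.letters ++ k.letters : List A) < _ from hlex) h6
    constructor
    · intro m hm
      rw [hlet]
      have hm' : m ∈ (psi h * psi k).coeff.support ∪ (psi k * psi h).coeff.support :=
        Finsupp.support_sub (by exact hm)
      rcases Finset.mem_union.mp hm' with h1 | h2
      · exact S1 m h1
      · exact ⟨(S2 m h2).1, Or.inr (S2 m h2).2⟩
    · rw [hlet]
      show (psi h * psi k - psi k * psi h).coeff (FreeMonoid.ofList (h.letters ++ k.letters)) = 1
      rw [MonoidAlgebra.coeff_sub, Finsupp.sub_apply]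
      have hofl : FreeMonoid.ofList (h.letters ++ k.letters)
          = FreeMonoid.ofList h.letters * FreeMonoid.ofList k.letters :=
        FreeMonoid.ofList_append _ _
      have e1 : (psi h * psi k).coeff (FreeMonoid.ofList (h.letters ++ k.letters)) = 1 := by
        rw [hofl, coeff_mul _ _ _ _ (fun m hm => by
          rw [(hsupH m hm).1, FreeMonoid.toList_ofList])]
        rw [hcoefH, hcoefK, mul_one]
      have e2 : (psi k * psi h).coeff (FreeMonoid.ofList (h.letters ++ k.letters)) = 0 := by
        apply Finsupp.notMem_support_iff.mp
        intro hmem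
        have h7 := (S2 _ hmem).2
        rw [FreeMonoid.toList_ofList] at h7
        exact lt_irrefl _ (show (h.letters ++ k.letters : List A) < _ from h7)
      rw [e1, e2, sub_zero]

end Algebra

section Final

variable {A : Type*} [LinearOrder A]

/-- the canonical Lie algebra morphism into the free associative algebra
(realized as a monoid algebra) -/
noncomputable def Phi (A : Type*) [LinearOrder A] :
    FreeLieAlgebra ℚ A →ₗ⁅ℚ⁆ MonoidAlgebra ℚ (FreeMonoid A) :=
  FreeLieAlgebra.lift ℚ (fun a => MonoidAlgebra.single (FreeMonoid.of a) 1)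

theorem Phi_toLie : ∀ L : LieExpr A, Phi A (LieExpr.toLie L) = psi L
  | .of a => by
    show Phi A (FreeLieAlgebra.of ℚ a) = _
    rw [Phi, FreeLieAlgebra.lift_of_apply]
    rfl
  | .br h k => by
    show Phi A ⁅LieExpr.toLie h, LieExpr.toLie k⁆ = _
    rw [LieHom.map_lie, Ring.lie_def, Phi_toLie h, Phi_toLie k]
    rfl

end Final

end LG

/-- **The left-greedy bracketings of distinct Lyndon-Shirshov words are linearly
independent** in the free Lie algebra over `ℚ`: any family indexed by the Lyndon-Shirshov
words whose member at `w` is the left-greedy bracketing `⌊w⌋` (computed from the full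
partition `t` of `w`) is linearly independent. -/
theorem leftGreedy_linearIndependent {A : Type*} [LinearOrder A]
    (f : {w : List A // IsLyndon w} → FreeLieAlgebra ℚ A)
    (hf : ∀ w, ∃ t : FP A, t.Valid ∧ t.word = w.1 ∧ f w = t.bracket.toLie) :
    LinearIndependent ℚ f := by
  classical
  apply LinearIndependent.of_comp (LG.Phi A).toLinearMap
  rw [linearIndependent_iff']
  intro s g hsum i hi
  by_contra hgi
  choose T hTval hTword hTf using hf
  have hOkE : ∀ w : {w : List A // IsLyndon w}, LG.OkE ((T w).bracket) :=
    fun w => LG.ok_okE _ (LG.main_ok (hTval w) (by rw [hTword]; exact w.2))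
  have hspec := fun w : {w : List A // IsLyndon w} => LG.psi_spec ((T w).bracket) (hOkE w)
  have hlet : ∀ w : {w : List A // IsLyndon w}, ((T w).bracket).letters = w.1 :=
    fun w => (LG.bracket_letters _).trans (hTword w)
  set s' := s.filter (fun j => g j ≠ 0) with hs'
  have hs'ne : s'.Nonempty := ⟨i, Finset.mem_filter.mpr ⟨hi, hgi⟩⟩
  obtain ⟨w₀, hw₀s, hw₀min⟩ :=
    Finset.exists_min_image s' (fun j => toLex ((j.1.length : ℕ), j.1)) hs'ne
  have hw₀s2 : w₀ ∈ s := (Finset.mem_filter.mp hw₀s).1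
  have hgw₀ : g w₀ ≠ 0 := (Finset.mem_filter.mp hw₀s).2
  have heval : (∑ j ∈ s, g j • ((LG.Phi A).toLinearMap ∘ f) j).coeff (FreeMonoid.ofList w₀.1)
      = ∑ j ∈ s, g j * ((LG.psi ((T j).bracket)).coeff (FreeMonoid.ofList w₀.1)) := by
    rw [MonoidAlgebra.coeff_sum, Finsupp.finset_sum_apply]
    apply Finset.sum_congr rfl
    intro j _
    have : ((LG.Phi A).toLinearMap ∘ f) j = LG.psi ((T j).bracket) := by
      show (LG.Phi A) (f j) = _
      rw [hTf j, LG.Phi_toLie]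
    rw [MonoidAlgebra.coeff_smul, Finsupp.smul_apply, this, smul_eq_mul]
  have hzero : ∑ j ∈ s, g j * ((LG.psi ((T j).bracket)).coeff (FreeMonoid.ofList w₀.1)) = 0 := by
    rw [← heval, hsum]
    rfl
  have hred : ∑ j ∈ s, g j * ((LG.psi ((T j).bracket)).coeff (FreeMonoid.ofList w₀.1))
      = g w₀ * 1 := by
    rw [Finset.sum_eq_single w₀]
    · have h1 := (hspec w₀).2
      rw [hlet w₀] at h1
      rw [h1]
    · intro j hj hjne
      by_cases hgj : g j = 0
      · rw [hgj, zero_mul]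
      · have hjs' : j ∈ s' := Finset.mem_filter.mpr ⟨hj, hgj⟩
        have hcz : (LG.psi ((T j).bracket)).coeff (FreeMonoid.ofList w₀.1) = 0 := by
          by_contra hne0
          have hmem := Finsupp.mem_support_iff.mpr hne0
          obtain ⟨hlen, hor⟩ := (hspec j).1 _ hmem
          rw [FreeMonoid.toList_ofList, hlet j] at hlen hor
          rcases hor with he | hlt
          · exact hjne (Subtype.ext he.symm)
          · have hklt : (toLex ((j.1.length : ℕ), j.1)) < toLex ((w₀.1.length : ℕ), w₀.1) := by
              rw [Prod.Lex.lt_iff]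
              right
              exact ⟨hlen.symm, hlt⟩
            exact absurd (hw₀min j hjs') (not_le.mpr hklt)
        rw [hcz, mul_zero]
    · intro habs
      exact absurd hw₀s2 habs
  rw [hred, mul_one] at hzero
  exact hgw₀ hzero
end

section
/- Bracketing Lie expressions is dual to cutting graphs: for a finite directed graph G with letter-labeled vertices in which every edge is separating (e.g. a tree), and Lie bracket expressions H and K, ⟨G, [H,K]⟩ = Σ_e ( ⟨G₁ᵉ, H⟩·⟨G₂ᵉ, K⟩ − ⟨G₁ᵉ, K⟩·⟨G₂ᵉ, H⟩ ), where the sum is over all edges e of G and G₁ᵉ, G₂ᵉ are the two subgraphs obtained by removing the edge e from G, ordered so that e pointed from G₁ᵉ to G₂ᵉ in G. -/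
open scoped Classical

namespace LGraph

variable {A : Type*}

/-- Reachability between vertices of `G` using only the edges in `R` (ignoring directions). -/
def reach (G : LGraph A) (R : Finset (G.V × G.V)) (x y : G.V) : Prop :=
  Relation.ReflTransGen (fun u v => (u, v) ∈ R ∨ (v, u) ∈ R) x y

/-- The full (induced) subgraph of `G` on a set `S` of vertices. -/
def induce (G : LGraph A) (S : Finset G.V) : LGraph A where
  V := {x : G.V // x ∈ S}
  edges := Finset.univ.filter fun p : {x : G.V // x ∈ S} × {x : G.V // x ∈ S} =>
    ((p.1 : G.V), (p.2 : G.V)) ∈ G.edges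
  label := fun x => G.label x

/-- The set of vertices of `G` reachable from `x` after removing the edge `e`. -/
noncomputable def side (G : LGraph A) (e : G.V × G.V) (x : G.V) : Finset G.V :=
  Finset.univ.filter fun v => G.reach (G.edges.erase e) x v

end LGraph

attribute [reducible] LGraph.induce

section AuxLemmas

variable {A : Type*}

lemma LieExpr.length_letters (L : LieExpr A) : L.letters.length = L.size := by
  induction L with
  | of a => rfl
  | br h k ih1 ih2 => simp [letters, size, ih1, ih2]

lemma LieExpr.intervals_bounds (L : LieExpr A) :
    ∀ (i : ℕ), ∀ q ∈ L.intervals i,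
      q.2.1 = q.1.1 + q.1.2 ∧ i ≤ q.1.1 ∧ q.2.1 + q.2.2 ≤ i + L.size := by
  induction L with
  | of a => intro i q hq; simp [intervals] at hq
  | br h k ih1 ih2 =>
    intro i q hq
    simp only [intervals, List.mem_cons, List.mem_append] at hq
    rcases hq with rfl | hq | hq
    · refine ⟨rfl, le_refl _, ?_⟩; simp [size]; omega
    · obtain ⟨h1, h2, h3⟩ := ih1 i q hq
      refine ⟨h1, h2, ?_⟩; simp [size]; omega
    · obtain ⟨h1, h2, h3⟩ := ih2 (i + h.size) q hq
      refine ⟨h1, by omega, ?_⟩; simp [size] at h3 ⊢; omega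

lemma LieExpr.intervals_shift (L : LieExpr A) (i : ℕ) :
    L.intervals i = (L.intervals 0).map
      (fun q => ((q.1.1 + i, q.1.2), (q.2.1 + i, q.2.2))) := by
  induction L generalizing i with
  | of a => simp [intervals]
  | br h k ih1 ih2 =>
    simp only [intervals, List.map_cons, List.map_append, zero_add]
    refine congrArg₂ _ (by simp [Prod.ext_iff]; omega) (congrArg₂ _ ?_ ?_)
    · exact ih1 i
    · rw [ih2 (i + h.size), ih2 h.size, List.map_map]
      congr 1
      funext q
      simp [Prod.ext_iff]; omega

namespace LGraph

variable (G : LGraph A)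

lemma reach_symm {R : Finset (G.V × G.V)} {x y : G.V} (h : G.reach R x y) :
    G.reach R y x :=
  (@Relation.ReflTransGen.stdSymm _ (fun u v : G.V => (u, v) ∈ R ∨ (v, u) ∈ R)
    ⟨fun _ _ hab => hab.symm⟩).symm _ _ h

lemma mem_side {e : G.V × G.V} {x v : G.V} :
    v ∈ G.side e x ↔ G.reach (G.edges.erase e) x v := by
  simp [side]

lemma side_conn (e : G.V × G.V) (x : G.V) : G.ConnOn (G.side e x) := by
  have key : ∀ v, G.reach (G.edges.erase e) x v →
      Relation.ReflTransGen (fun u w => u ∈ G.side e x ∧ w ∈ G.side e x ∧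
        ((u, w) ∈ G.edges ∨ (w, u) ∈ G.edges)) x v := by
    intro v h
    induction h with
    | refl => exact .refl
    | tail hxc hcd ih =>
      refine ih.tail ⟨G.mem_side.2 (by assumption), G.mem_side.2 ((by assumption : G.reach _ x _).tail hcd), ?_⟩
      rcases hcd with h' | h'
      · exact Or.inl (Finset.mem_of_mem_erase h')
      · exact Or.inr (Finset.mem_of_mem_erase h')
  constructor
  · exact ⟨x, G.mem_side.2 .refl⟩
  · intro u hu v hv
    have hsym : Symmetric (fun u w : G.V => u ∈ G.side e x ∧ w ∈ G.side e x ∧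
        ((u, w) ∈ G.edges ∨ (w, u) ∈ G.edges)) := fun p q h => ⟨h.2.1, h.1, h.2.2.symm⟩
    exact (((@Relation.ReflTransGen.stdSymm _ _ ⟨hsym⟩).symm _ _ (key u (G.mem_side.1 hu)))).trans
      (key v (G.mem_side.1 hv))

lemma mem_map_subtype (S : Finset G.V) (S' : Finset {x : G.V // x ∈ S}) (v : G.V) :
    v ∈ S'.map (Function.Embedding.subtype fun x => x ∈ S) ↔
      ∃ h : v ∈ S, (⟨v, h⟩ : {x : G.V // x ∈ S}) ∈ S' := by
  simp only [Finset.mem_map, Function.Embedding.coe_subtype]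
  constructor
  · rintro ⟨⟨w, hw⟩, hw', rfl⟩; exact ⟨hw, hw'⟩
  · rintro ⟨h, h'⟩; exact ⟨⟨v, h⟩, h', rfl⟩

lemma mem_induce_edges (S : Finset G.V) (p : {x : G.V // x ∈ S} × {x : G.V // x ∈ S}) :
    p ∈ (G.induce S).edges ↔ ((p.1 : G.V), (p.2 : G.V)) ∈ G.edges := by
  simp [LGraph.induce]

lemma connOn_induce_iff (S : Finset G.V) (S' : Finset {x : G.V // x ∈ S}) :
    (G.induce S).ConnOn S' ↔
      G.ConnOn (S'.map (Function.Embedding.subtype fun x => x ∈ S)) := by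
  constructor
  · rintro ⟨hne, hconn⟩
    refine ⟨hne.map, ?_⟩
    intro x hx y hy
    obtain ⟨hxs, hx'⟩ := (G.mem_map_subtype S S' x).1 hx
    obtain ⟨hys, hy'⟩ := (G.mem_map_subtype S S' y).1 hy
    have h := hconn _ hx' _ hy'
    have h2 := Relation.ReflTransGen.lift
      (p := fun u v : G.V => u ∈ S'.map (Function.Embedding.subtype fun x => x ∈ S) ∧
        v ∈ S'.map (Function.Embedding.subtype fun x => x ∈ S) ∧
        ((u, v) ∈ G.edges ∨ (v, u) ∈ G.edges))
      (Subtype.val) ?_ _ _ h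
    · simpa using h2
    · rintro a b ⟨ha, hb, hab⟩
      refine ⟨(G.mem_map_subtype S S' _).2 ⟨a.2, ha⟩, (G.mem_map_subtype S S' _).2 ⟨b.2, hb⟩, ?_⟩
      rcases hab with h' | h'
      · exact Or.inl ((G.mem_induce_edges S _).1 h')
      · exact Or.inr ((G.mem_induce_edges S _).1 h')
  · rintro ⟨hne, hconn⟩
    have hne' : S'.Nonempty := by
      obtain ⟨x, hx⟩ := hne
      obtain ⟨h, h'⟩ := (G.mem_map_subtype S S' x).1 hx
      exact ⟨_, h'⟩
    refine ⟨hne', ?_⟩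
    rintro ⟨xv, hxS⟩ hx ⟨yv, hyS⟩ hy
    set x : {v : G.V // v ∈ S} := ⟨xv, hxS⟩ with hxdef
    set y : {v : G.V // v ∈ S} := ⟨yv, hyS⟩ with hydef
    have hx' : (x : G.V) ∈ S'.map (Function.Embedding.subtype fun x => x ∈ S) :=
      (G.mem_map_subtype S S' _).2 ⟨x.2, hx⟩
    have hy' : (y : G.V) ∈ S'.map (Function.Embedding.subtype fun x => x ∈ S) :=
      (G.mem_map_subtype S S' _).2 ⟨y.2, hy⟩
    have key : ∀ v, Relation.ReflTransGen
        (fun u w => u ∈ S'.map (Function.Embedding.subtype fun x => x ∈ S) ∧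
          w ∈ S'.map (Function.Embedding.subtype fun x => x ∈ S) ∧
          ((u, w) ∈ G.edges ∨ (w, u) ∈ G.edges)) (↑x) v →
        ∃ hv : v ∈ S, (⟨v, hv⟩ : {x : G.V // x ∈ S}) ∈ S' ∧
          Relation.ReflTransGen (fun u w => u ∈ S' ∧ w ∈ S' ∧
            ((u, w) ∈ (G.induce S).edges ∨ (w, u) ∈ (G.induce S).edges)) x ⟨v, hv⟩ := by
      intro v h
      induction h with
      | refl => exact ⟨x.2, hx, .refl⟩
      | tail hxc hcd ih =>
        obtain ⟨hc, hc', ihr⟩ := ih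
        obtain ⟨_, hd, hcd'⟩ := hcd
        obtain ⟨hdS, hd'⟩ := (G.mem_map_subtype S S' _).1 hd
        refine ⟨hdS, hd', ihr.tail ⟨hc', hd', ?_⟩⟩
        rcases hcd' with h' | h'
        · exact Or.inl ((G.mem_induce_edges S _).2 h')
        · exact Or.inr ((G.mem_induce_edges S _).2 h')
    obtain ⟨hv, hv', hr⟩ := key _ (hconn _ hx' _ hy')
    have heq : (⟨(y : G.V), hv⟩ : {x : G.V // x ∈ S}) = y := Subtype.ext rfl
    rwa [heq] at hr

lemma between_induce (S : Finset G.V) (S' T' : Finset {x : G.V // x ∈ S}) :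
    G.between (S'.map (Function.Embedding.subtype fun x => x ∈ S))
        (T'.map (Function.Embedding.subtype fun x => x ∈ S)) =
      ((G.induce S).between S' T').map
        ((Function.Embedding.subtype fun x => x ∈ S).prodMap
          (Function.Embedding.subtype fun x => x ∈ S)) := by
  ext f
  simp only [LGraph.between, Finset.mem_filter, Finset.mem_map, Function.Embedding.prodMap,
    Function.Embedding.coeFn_mk, Function.Embedding.coe_subtype]
  constructor
  · rintro ⟨he, hcase⟩
    rcases hcase with ⟨h1, h2⟩ | ⟨h1, h2⟩
    · obtain ⟨u, hu, hu'⟩ := h1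
      obtain ⟨w, hw, hw'⟩ := h2
      refine ⟨(u, w), ⟨⟨Finset.mem_univ _, by simpa [hu', hw'] using he⟩,
        Or.inl ⟨hu, hw⟩⟩, by simp [Prod.ext_iff, hu', hw']⟩
    · obtain ⟨u, hu, hu'⟩ := h1
      obtain ⟨w, hw, hw'⟩ := h2
      refine ⟨(u, w), ⟨⟨Finset.mem_univ _, by simpa [hu', hw'] using he⟩,
        Or.inr ⟨hu, hw⟩⟩, by simp [Prod.ext_iff, hu', hw']⟩
  · rintro ⟨⟨u, w⟩, ⟨hE, hc⟩, rfl⟩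
    refine ⟨by simpa using hE.2, ?_⟩
    rcases hc with ⟨h1, h2⟩ | ⟨h1, h2⟩
    · exact Or.inl ⟨⟨u, h1, rfl⟩, ⟨w, h2, rfl⟩⟩
    · exact Or.inr ⟨⟨u, h1, rfl⟩, ⟨w, h2, rfl⟩⟩

end LGraph

section Glue

variable {A : Type*} {G : LGraph A} {S T : Finset G.V}

/-- Combine bijections on the two sides of a partition into a bijection on all vertices. -/
def glue (hT : ∀ v, v ∈ T ↔ v ∉ S) {a b m : ℕ} (hm : a + b = m)
    (σ₁ : {x : G.V // x ∈ S} ≃ Fin a) (σ₂ : {x : G.V // x ∈ T} ≃ Fin b) : G.V ≃ Fin m where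
  toFun v :=
    if h : v ∈ S then ⟨σ₁ ⟨v, h⟩, by have := (σ₁ ⟨v, h⟩).isLt; omega⟩
    else ⟨a + σ₂ ⟨v, (hT v).2 h⟩, by have := (σ₂ ⟨v, (hT v).2 h⟩).isLt; omega⟩
  invFun k :=
    if h : (k : ℕ) < a then (σ₁.symm ⟨k, h⟩ : {x : G.V // x ∈ S}).1
    else (σ₂.symm ⟨(k : ℕ) - a, by have := k.isLt; omega⟩ : {x : G.V // x ∈ T}).1
  left_inv v := by
    dsimp only
    by_cases h : v ∈ S
    · rw [dif_pos h]
      split_ifs with h2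
      · simp
      · exact absurd (σ₁ ⟨v, h⟩).isLt (by simpa using h2)
    · rw [dif_neg h]
      split_ifs with h2
      · simp only [Fin.val_mk] at h2; omega
      · simp [Nat.add_sub_cancel_left]
  right_inv k := by
    dsimp only
    by_cases h : (k : ℕ) < a
    · rw [dif_pos h]
      split_ifs with h2
      · simp
      · exact absurd (σ₁.symm ⟨k, h⟩).2 h2
    · rw [dif_neg h]
      split_ifs with h2
      · exact absurd h2 ((hT _).1 (σ₂.symm ⟨(k : ℕ) - a, by have := k.isLt; omega⟩).2)
      · apply Fin.ext
        simp only [Fin.val_mk, Subtype.eta, Equiv.apply_symm_apply]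
        omega

lemma glue_val_of_mem (hT : ∀ v, v ∈ T ↔ v ∉ S) {a b m : ℕ} (hm : a + b = m)
    (σ₁ : {x : G.V // x ∈ S} ≃ Fin a) (σ₂ : {x : G.V // x ∈ T} ≃ Fin b) {v : G.V}
    (h : v ∈ S) : ((glue hT hm σ₁ σ₂ v : Fin m) : ℕ) = σ₁ ⟨v, h⟩ := by
  simp [glue, dif_pos h]

lemma glue_val_of_not_mem (hT : ∀ v, v ∈ T ↔ v ∉ S) {a b m : ℕ} (hm : a + b = m)
    (σ₁ : {x : G.V // x ∈ S} ≃ Fin a) (σ₂ : {x : G.V // x ∈ T} ≃ Fin b) {v : G.V}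
    (h : v ∉ S) : ((glue hT hm σ₁ σ₂ v : Fin m) : ℕ) = a + σ₂ ⟨v, (hT v).2 h⟩ := by
  simp [glue, dif_neg h]

lemma posSet_glue_left (hT : ∀ v, v ∈ T ↔ v ∉ S) {a b m : ℕ} (hm : a + b = m)
    (σ₁ : {x : G.V // x ∈ S} ≃ Fin a) (σ₂ : {x : G.V // x ∈ T} ≃ Fin b) {st len : ℕ}
    (hst : st + len ≤ a) :
    posSet G (glue hT hm σ₁ σ₂) st len =
      (posSet (G.induce S) σ₁ st len).map (Function.Embedding.subtype fun x => x ∈ S) := by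
  ext v
  rw [LGraph.mem_map_subtype]
  simp only [posSet, Finset.mem_filter, Finset.mem_univ, true_and]
  by_cases h : v ∈ S
  · rw [glue_val_of_mem hT hm σ₁ σ₂ h]
    exact ⟨fun hc => ⟨h, hc⟩, fun ⟨h', hc⟩ => hc⟩
  · rw [glue_val_of_not_mem hT hm σ₁ σ₂ h]
    constructor
    · intro hc; exact absurd hc (by omega)
    · rintro ⟨h', _⟩; exact absurd h' h

lemma posSet_glue_right (hT : ∀ v, v ∈ T ↔ v ∉ S) {a b m : ℕ} (hm : a + b = m)
    (σ₁ : {x : G.V // x ∈ S} ≃ Fin a) (σ₂ : {x : G.V // x ∈ T} ≃ Fin b) {st len : ℕ} :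
    posSet G (glue hT hm σ₁ σ₂) (a + st) len =
      (posSet (G.induce T) σ₂ st len).map (Function.Embedding.subtype fun x => x ∈ T) := by
  ext v
  rw [LGraph.mem_map_subtype]
  simp only [posSet, Finset.mem_filter, Finset.mem_univ, true_and]
  by_cases h : v ∈ S
  · rw [glue_val_of_mem hT hm σ₁ σ₂ h]
    constructor
    · intro hc; have := (σ₁ ⟨v, h⟩).isLt; exact absurd hc (by omega)
    · rintro ⟨h', _⟩; exact absurd ((hT v).1 h') (not_not_intro h)
  · rw [glue_val_of_not_mem hT hm σ₁ σ₂ h]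
    constructor
    · rintro ⟨h1, h2⟩; exact ⟨(hT v).2 h, by omega, by omega⟩
    · rintro ⟨h', h1, h2⟩
      have he : (⟨v, h'⟩ : {x : G.V // x ∈ T}) = ⟨v, (hT v).2 h⟩ := rfl
      rw [he] at h1 h2
      exact ⟨by omega, by omega⟩

lemma posSet_glue_base (hT : ∀ v, v ∈ T ↔ v ∉ S) {a b m : ℕ} (hm : a + b = m)
    (σ₁ : {x : G.V // x ∈ S} ≃ Fin a) (σ₂ : {x : G.V // x ∈ T} ≃ Fin b) :
    posSet G (glue hT hm σ₁ σ₂) 0 a = S := by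
  ext v
  simp only [posSet, Finset.mem_filter, Finset.mem_univ, true_and, zero_add]
  by_cases h : v ∈ S
  · rw [glue_val_of_mem hT hm σ₁ σ₂ h]
    exact iff_of_true ⟨Nat.zero_le _, (σ₁ ⟨v, h⟩).isLt⟩ h
  · rw [glue_val_of_not_mem hT hm σ₁ σ₂ h]
    exact iff_of_false (by omega) h

lemma posSet_glue_base2 (hT : ∀ v, v ∈ T ↔ v ∉ S) {a b m : ℕ} (hm : a + b = m)
    (σ₁ : {x : G.V // x ∈ S} ≃ Fin a) (σ₂ : {x : G.V // x ∈ T} ≃ Fin b) :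
    posSet G (glue hT hm σ₁ σ₂) a b = T := by
  ext v
  simp only [posSet, Finset.mem_filter, Finset.mem_univ, true_and]
  by_cases h : v ∈ S
  · rw [glue_val_of_mem hT hm σ₁ σ₂ h]
    have := (σ₁ ⟨v, h⟩).isLt
    exact iff_of_false (by omega) (fun hc => (hT v).1 hc h)
  · rw [glue_val_of_not_mem hT hm σ₁ σ₂ h]
    have := (σ₂ ⟨v, (hT v).2 h⟩).isLt
    exact iff_of_true ⟨by omega, by omega⟩ ((hT v).2 h)

end Glue

open Finset in
/-- Central lemma: the sum of `⟨G,[H,K]⟩_σ` over label-preserving bijections sending `S` to the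
positions of `H`, when `S, T` partition the vertices with a single edge `e0` between them and
both sides connected, is `±⟨G₁,H⟩⟨G₂,K⟩` according to the orientation of `e0`. -/
lemma sum_filter_posSet_eq {A : Type*} (G : LGraph A) (H K : LieExpr A) (S T : Finset G.V)
    (e0 : G.V × G.V) (hT : ∀ v, v ∈ T ↔ v ∉ S) (he0 : e0 ∈ G.edges)
    (hsplit : (e0.1 ∈ S ∧ e0.2 ∈ T) ∨ (e0.1 ∈ T ∧ e0.2 ∈ S))
    (hclass : ∀ f ∈ G.edges, f ≠ e0 → (f.1 ∈ S ∧ f.2 ∈ S) ∨ (f.1 ∈ T ∧ f.2 ∈ T))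
    (hconnS : G.ConnOn S) (hconnT : G.ConnOn T) :
    ∑ σ ∈ (Bijections G (.br H K)).filter (fun σ => posSet G σ 0 H.size = S),
        pairingAt G (.br H K) σ =
      (if e0.1 ∈ S then 1 else -1) *
        (pairing (G.induce S) H * pairing (G.induce T) K) := by
  classical
  have hm : H.letters.length + K.letters.length = (LieExpr.br H K).letters.length := by
    simp [LieExpr.letters]
  have ha : H.size = H.letters.length := (H.length_letters).symm
  have hb : K.size = K.letters.length := (K.length_letters).symm
  have hbetween : G.between S T = {e0} := by
    ext f
    simp only [LGraph.between, mem_filter, mem_singleton]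
    constructor
    · rintro ⟨hf, hor⟩
      by_contra hne
      rcases hclass f hf hne with ⟨h1, h2⟩ | ⟨h1, h2⟩
      · rcases hor with ⟨u1, u2⟩ | ⟨u1, u2⟩
        · exact (hT f.2).1 u2 h2
        · exact (hT f.1).1 u1 h1
      · rcases hor with ⟨u1, u2⟩ | ⟨u1, u2⟩
        · exact (hT f.1).1 h1 u1
        · exact (hT f.2).1 h2 u2
    · rintro rfl; exact ⟨he0, hsplit⟩
  -- per-interval transfer, H side
  have hCq : ∀ (σ₁ : {x : G.V // x ∈ S} ≃ Fin H.letters.length)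
      (σ₂ : {x : G.V // x ∈ T} ≃ Fin K.letters.length) (q : (ℕ × ℕ) × (ℕ × ℕ)),
      q.1.1 + q.1.2 ≤ H.letters.length → q.2.1 + q.2.2 ≤ H.letters.length →
      ((G.ConnOn (posSet G (glue hT hm σ₁ σ₂) q.1.1 q.1.2) ∧
        G.ConnOn (posSet G (glue hT hm σ₁ σ₂) q.2.1 q.2.2) ∧
        (G.between (posSet G (glue hT hm σ₁ σ₂) q.1.1 q.1.2)
          (posSet G (glue hT hm σ₁ σ₂) q.2.1 q.2.2)).card = 1) ↔
      ((G.induce S).ConnOn (posSet (G.induce S) σ₁ q.1.1 q.1.2) ∧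
        (G.induce S).ConnOn (posSet (G.induce S) σ₁ q.2.1 q.2.2) ∧
        ((G.induce S).between (posSet (G.induce S) σ₁ q.1.1 q.1.2)
          (posSet (G.induce S) σ₁ q.2.1 q.2.2)).card = 1)) := by
    intro σ₁ σ₂ q h1 h2
    rw [posSet_glue_left hT hm σ₁ σ₂ h1, posSet_glue_left hT hm σ₁ σ₂ h2,
      G.between_induce, Finset.card_map, ← G.connOn_induce_iff, ← G.connOn_induce_iff]
  -- per-interval transfer, K side
  have hCq' : ∀ (σ₁ : {x : G.V // x ∈ S} ≃ Fin H.letters.length)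
      (σ₂ : {x : G.V // x ∈ T} ≃ Fin K.letters.length) (q : (ℕ × ℕ) × (ℕ × ℕ)),
      ((G.ConnOn (posSet G (glue hT hm σ₁ σ₂) (q.1.1 + H.letters.length) q.1.2) ∧
        G.ConnOn (posSet G (glue hT hm σ₁ σ₂) (q.2.1 + H.letters.length) q.2.2) ∧
        (G.between (posSet G (glue hT hm σ₁ σ₂) (q.1.1 + H.letters.length) q.1.2)
          (posSet G (glue hT hm σ₁ σ₂) (q.2.1 + H.letters.length) q.2.2)).card = 1) ↔
      ((G.induce T).ConnOn (posSet (G.induce T) σ₂ q.1.1 q.1.2) ∧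
        (G.induce T).ConnOn (posSet (G.induce T) σ₂ q.2.1 q.2.2) ∧
        ((G.induce T).between (posSet (G.induce T) σ₂ q.1.1 q.1.2)
          (posSet (G.induce T) σ₂ q.2.1 q.2.2)).card = 1)) := by
    intro σ₁ σ₂ q
    rw [Nat.add_comm q.1.1, Nat.add_comm q.2.1,
      posSet_glue_right hT hm σ₁ σ₂, posSet_glue_right hT hm σ₁ σ₂,
      G.between_induce, Finset.card_map, ← G.connOn_induce_iff, ← G.connOn_induce_iff]
  -- goodness transfer
  have hkey : ∀ (σ₁ : {x : G.V // x ∈ S} ≃ Fin H.letters.length)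
      (σ₂ : {x : G.V // x ∈ T} ≃ Fin K.letters.length),
      Good G (.br H K) (glue hT hm σ₁ σ₂) ↔
        Good (G.induce S) H σ₁ ∧ Good (G.induce T) K σ₂ := by
    intro σ₁ σ₂
    have e1 : posSet G (glue hT hm σ₁ σ₂) 0 H.size = S := by
      rw [ha]; exact posSet_glue_base hT hm σ₁ σ₂
    have e2 : posSet G (glue hT hm σ₁ σ₂) (0 + H.size) K.size = T := by
      rw [zero_add, ha, hb]; exact posSet_glue_base2 hT hm σ₁ σ₂
    have hhead : G.ConnOn (posSet G (glue hT hm σ₁ σ₂) 0 H.size) ∧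
        G.ConnOn (posSet G (glue hT hm σ₁ σ₂) (0 + H.size) K.size) ∧
        (G.between (posSet G (glue hT hm σ₁ σ₂) 0 H.size)
          (posSet G (glue hT hm σ₁ σ₂) (0 + H.size) K.size)).card = 1 := by
      rw [e1, e2, hbetween]
      exact ⟨hconnS, hconnT, Finset.card_singleton _⟩
    constructor
    · intro hg
      constructor
      · intro q hq
        obtain ⟨hb1, hb2, hb3⟩ := LieExpr.intervals_bounds H 0 q hq
        have h1 : q.1.1 + q.1.2 ≤ H.letters.length := by rw [H.length_letters]; omega
        have h2 : q.2.1 + q.2.2 ≤ H.letters.length := by rw [H.length_letters]; omega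
        exact (hCq σ₁ σ₂ q h1 h2).1 (hg q (by
          simp only [LieExpr.intervals, List.mem_cons, List.mem_append]
          exact Or.inr (Or.inl hq)))
      · intro q hq
        have hmem : ((q.1.1 + H.letters.length, q.1.2), (q.2.1 + H.letters.length, q.2.2)) ∈
            (LieExpr.br H K).intervals 0 := by
          simp only [LieExpr.intervals, List.mem_cons, List.mem_append]
          refine Or.inr (Or.inr ?_)
          rw [zero_add, LieExpr.intervals_shift K H.size, ← ha]
          exact List.mem_map_of_mem hq
        exact (hCq' σ₁ σ₂ q).1 (hg _ hmem)
    · rintro ⟨hg1, hg2⟩ q hq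
      simp only [LieExpr.intervals, List.mem_cons, List.mem_append] at hq
      rcases hq with rfl | hq | hq
      · exact hhead
      · obtain ⟨hb1, hb2, hb3⟩ := LieExpr.intervals_bounds H 0 q hq
        have h1 : q.1.1 + q.1.2 ≤ H.letters.length := by rw [H.length_letters]; omega
        have h2 : q.2.1 + q.2.2 ≤ H.letters.length := by rw [H.length_letters]; omega
        exact (hCq σ₁ σ₂ q h1 h2).2 (hg1 q hq)
      · rw [zero_add, LieExpr.intervals_shift K H.size] at hq
        obtain ⟨q₀, hq₀, rfl⟩ := List.mem_map.1 hq
        have := (hCq' σ₁ σ₂ q₀).2 (hg2 q₀ hq₀)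
        rw [ha]
        exact this
  -- labels transfer
  have hget1 : ∀ (σ₁ : {x : G.V // x ∈ S} ≃ Fin H.letters.length)
      (σ₂ : {x : G.V // x ∈ T} ≃ Fin K.letters.length) (v : G.V) (h : v ∈ S),
      (LieExpr.br H K).letters.get (glue hT hm σ₁ σ₂ v) = H.letters.get (σ₁ ⟨v, h⟩) := by
    intro σ₁ σ₂ v h
    have hv := glue_val_of_mem hT hm σ₁ σ₂ h
    simp only [List.get_eq_getElem,
      show (LieExpr.br H K).letters = H.letters ++ K.letters from rfl, hv]
    exact List.getElem_append_left (σ₁ ⟨v, h⟩).isLt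
  have hget2 : ∀ (σ₁ : {x : G.V // x ∈ S} ≃ Fin H.letters.length)
      (σ₂ : {x : G.V // x ∈ T} ≃ Fin K.letters.length) (v : G.V) (h : v ∉ S),
      (LieExpr.br H K).letters.get (glue hT hm σ₁ σ₂ v) =
        K.letters.get (σ₂ ⟨v, (hT v).2 h⟩) := by
    intro σ₁ σ₂ v h
    have hv := glue_val_of_not_mem hT hm σ₁ σ₂ h
    simp only [List.get_eq_getElem,
      show (LieExpr.br H K).letters = H.letters ++ K.letters from rfl, hv]
    rw [List.getElem_append_right (by omega)]
    congr 1
    omega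
  have hlab : ∀ (σ₁ : {x : G.V // x ∈ S} ≃ Fin H.letters.length)
      (σ₂ : {x : G.V // x ∈ T} ≃ Fin K.letters.length),
      (glue hT hm σ₁ σ₂ ∈ Bijections G (.br H K)) ↔
        (σ₁ ∈ Bijections (G.induce S) H ∧ σ₂ ∈ Bijections (G.induce T) K) := by
    intro σ₁ σ₂
    simp only [Bijections, mem_filter, mem_univ, true_and]
    constructor
    · intro hσ
      constructor
      · rintro ⟨v, hv⟩
        have h := hσ v
        rw [hget1 σ₁ σ₂ v hv] at h
        exact h
      · rintro ⟨v, hv⟩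
        have h := hσ v
        rw [hget2 σ₁ σ₂ v ((hT v).1 hv)] at h
        exact h
    · rintro ⟨h1, h2⟩ v
      by_cases h : v ∈ S
      · rw [hget1 σ₁ σ₂ v h]; exact h1 ⟨v, h⟩
      · rw [hget2 σ₁ σ₂ v h]; exact h2 ⟨v, (hT v).2 h⟩
  -- sign transfer
  have hsign : ∀ (σ₁ : {x : G.V // x ∈ S} ≃ Fin H.letters.length)
      (σ₂ : {x : G.V // x ∈ T} ≃ Fin K.letters.length),
      (G.edges.filter fun f => ((glue hT hm σ₁ σ₂) f.2 : ℕ) < ((glue hT hm σ₁ σ₂) f.1 : ℕ)).card =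
        ((G.induce S).edges.filter fun f => (σ₁ f.2 : ℕ) < (σ₁ f.1 : ℕ)).card +
        ((G.induce T).edges.filter fun f => (σ₂ f.2 : ℕ) < (σ₂ f.1 : ℕ)).card +
        (if e0.1 ∈ S then 0 else 1) := by
    intro σ₁ σ₂
    set eS := G.edges.filter (fun f => f.1 ∈ S ∧ f.2 ∈ S) with heS
    set eT := G.edges.filter (fun f => f.1 ∈ T ∧ f.2 ∈ T) with heT
    have hE : eS ∪ eT ∪ {e0} = G.edges := by
      ext f
      simp only [heS, heT, mem_union, mem_filter, mem_singleton]
      constructor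
      · rintro ((⟨h, _⟩ | ⟨h, _⟩) | rfl)
        · exact h
        · exact h
        · exact he0
      · intro hf
        by_cases hfe : f = e0
        · exact Or.inr hfe
        · rcases hclass f hf hfe with h | h
          · exact Or.inl (Or.inl ⟨hf, h⟩)
          · exact Or.inl (Or.inr ⟨hf, h⟩)
    have hd1 : Disjoint eS eT := by
      rw [Finset.disjoint_left]
      rintro f hf hf'
      rw [heS, mem_filter] at hf
      rw [heT, mem_filter] at hf'
      exact (hT f.1).1 hf'.2.1 hf.2.1
    have hd2 : Disjoint (eS ∪ eT) ({e0} : Finset (G.V × G.V)) := by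
      rw [Finset.disjoint_right]
      intro f hf
      rw [mem_singleton] at hf
      subst hf
      rw [mem_union, heS, heT, mem_filter, mem_filter]
      rcases hsplit with ⟨h1, h2⟩ | ⟨h1, h2⟩
      · rintro (⟨_, _, hc⟩ | ⟨_, hc, _⟩)
        · exact (hT _).1 h2 hc
        · exact (hT _).1 hc h1
      · rintro (⟨_, hc, _⟩ | ⟨_, _, hc⟩)
        · exact (hT _).1 h1 hc
        · exact (hT _).1 hc h2
    rw [← hE, filter_union, filter_union]
    rw [card_union_of_disjoint (by
      rw [← Finset.filter_union]
      exact Finset.disjoint_filter_filter hd2)]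
    rw [card_union_of_disjoint (Finset.disjoint_filter_filter hd1)]
    have cS : (eS.filter fun f => ((glue hT hm σ₁ σ₂) f.2 : ℕ) < ((glue hT hm σ₁ σ₂) f.1 : ℕ)).card
        = ((G.induce S).edges.filter fun f => (σ₁ f.2 : ℕ) < (σ₁ f.1 : ℕ)).card := by
      refine Finset.card_bij'
        (fun f hf => ((⟨f.1, by rw [mem_filter, heS, mem_filter] at hf; exact hf.1.2.1⟩,
          ⟨f.2, by rw [mem_filter, heS, mem_filter] at hf; exact hf.1.2.2⟩) :
            {x : G.V // x ∈ S} × {x : G.V // x ∈ S}))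
        (fun g _ => (Subtype.val g.1, Subtype.val g.2)) ?_ ?_ ?_ ?_
      · intro f hf
        have hf' := hf
        rw [mem_filter, heS, mem_filter] at hf'
        obtain ⟨⟨hfe, hf1, hf2⟩, hdesc⟩ := hf'
        rw [mem_filter]
        constructor
        · exact (G.mem_induce_edges S _).2 hfe
        · show (σ₁ ⟨f.2, _⟩ : ℕ) < (σ₁ ⟨f.1, _⟩ : ℕ)
          rw [glue_val_of_mem hT hm σ₁ σ₂ hf1, glue_val_of_mem hT hm σ₁ σ₂ hf2] at hdesc
          exact hdesc
      · intro g hg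
        rw [mem_filter] at hg
        obtain ⟨hge, hdesc⟩ := hg
        rw [mem_filter, heS, mem_filter]
        refine ⟨⟨(G.mem_induce_edges S _).1 hge, g.1.2, g.2.2⟩, ?_⟩
        dsimp only
        rw [glue_val_of_mem hT hm σ₁ σ₂ g.1.2, glue_val_of_mem hT hm σ₁ σ₂ g.2.2]
        exact hdesc
      · intro f hf; rfl
      · intro g hg
        exact Prod.ext_iff.2 ⟨Subtype.ext rfl, Subtype.ext rfl⟩
    have cT : (eT.filter fun f => ((glue hT hm σ₁ σ₂) f.2 : ℕ) < ((glue hT hm σ₁ σ₂) f.1 : ℕ)).card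
        = ((G.induce T).edges.filter fun f => (σ₂ f.2 : ℕ) < (σ₂ f.1 : ℕ)).card := by
      refine Finset.card_bij'
        (fun f hf => ((⟨f.1, by rw [mem_filter, heT, mem_filter] at hf; exact hf.1.2.1⟩,
          ⟨f.2, by rw [mem_filter, heT, mem_filter] at hf; exact hf.1.2.2⟩) :
            {x : G.V // x ∈ T} × {x : G.V // x ∈ T}))
        (fun g _ => (Subtype.val g.1, Subtype.val g.2)) ?_ ?_ ?_ ?_
      · intro f hf
        have hf' := hf
        rw [mem_filter, heT, mem_filter] at hf'
        obtain ⟨⟨hfe, hf1, hf2⟩, hdesc⟩ := hf'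
        rw [mem_filter]
        refine ⟨(G.mem_induce_edges T _).2 hfe, ?_⟩
        show (σ₂ ⟨f.2, _⟩ : ℕ) < (σ₂ ⟨f.1, _⟩ : ℕ)
        rw [glue_val_of_not_mem hT hm σ₁ σ₂ ((hT f.1).1 hf1),
          glue_val_of_not_mem hT hm σ₁ σ₂ ((hT f.2).1 hf2)] at hdesc
        exact lt_of_add_lt_add_left hdesc
      · intro g hg
        rw [mem_filter] at hg
        obtain ⟨hge, hdesc⟩ := hg
        rw [mem_filter, heT, mem_filter]
        refine ⟨⟨(G.mem_induce_edges T _).1 hge, g.1.2, g.2.2⟩, ?_⟩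
        dsimp only
        rw [glue_val_of_not_mem hT hm σ₁ σ₂ ((hT _).1 g.1.2),
          glue_val_of_not_mem hT hm σ₁ σ₂ ((hT _).1 g.2.2)]
        have e1 : (⟨Subtype.val g.1, (hT _).2 ((hT _).1 g.1.2)⟩ : {x : G.V // x ∈ T}) = g.1 :=
          Subtype.ext rfl
        have e2 : (⟨Subtype.val g.2, (hT _).2 ((hT _).1 g.2.2)⟩ : {x : G.V // x ∈ T}) = g.2 :=
          Subtype.ext rfl
        rw [e1, e2]
        exact Nat.add_lt_add_left hdesc _
      · intro f hf; rfl
      · intro g hg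
        exact Prod.ext_iff.2 ⟨Subtype.ext rfl, Subtype.ext rfl⟩
    have c0 : (({e0} : Finset (G.V × G.V)).filter
        fun f => ((glue hT hm σ₁ σ₂) f.2 : ℕ) < ((glue hT hm σ₁ σ₂) f.1 : ℕ)).card =
        (if e0.1 ∈ S then 0 else 1) := by
      rw [Finset.filter_singleton]
      rcases hsplit with ⟨h1, h2⟩ | ⟨h1, h2⟩
      · rw [if_neg, if_pos h1]
        · exact Finset.card_empty
        · rw [glue_val_of_mem hT hm σ₁ σ₂ h1,
            glue_val_of_not_mem hT hm σ₁ σ₂ (fun hc => (hT e0.2).1 h2 hc)]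
          have := (σ₁ ⟨e0.1, h1⟩).isLt
          omega
      · have h1' : e0.1 ∉ S := (hT e0.1).1 h1
        rw [if_pos, if_neg h1']
        · exact Finset.card_singleton _
        · rw [glue_val_of_mem hT hm σ₁ σ₂ h2, glue_val_of_not_mem hT hm σ₁ σ₂ h1']
          have := (σ₁ ⟨e0.2, h2⟩).isLt
          omega
    rw [cS, cT, c0]
  -- pointwise value transfer
  have hval : ∀ (σ₁ : {x : G.V // x ∈ S} ≃ Fin H.letters.length)
      (σ₂ : {x : G.V // x ∈ T} ≃ Fin K.letters.length),
      pairingAt G (.br H K) (glue hT hm σ₁ σ₂) =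
        (if e0.1 ∈ S then 1 else -1) *
          (pairingAt (G.induce S) H σ₁ * pairingAt (G.induce T) K σ₂) := by
    intro σ₁ σ₂
    rw [pairingAt, pairingAt, pairingAt]
    by_cases h1 : Good (G.induce S) H σ₁
    · by_cases h2 : Good (G.induce T) K σ₂
      · rw [if_pos ((hkey σ₁ σ₂).2 ⟨h1, h2⟩), if_pos h1, if_pos h2, hsign σ₁ σ₂,
          pow_add, pow_add]
        by_cases h0 : e0.1 ∈ S
        · rw [if_pos h0, if_pos h0, pow_zero, mul_one, one_mul]
        · rw [if_neg h0, if_neg h0, pow_one]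
          rw [mul_comm]
      · rw [if_neg (fun hc => h2 ((hkey σ₁ σ₂).1 hc).2), if_neg h2]; ring
    · rw [if_neg (fun hc => h1 ((hkey σ₁ σ₂).1 hc).1), if_neg h1]; ring
  -- main bijection
  have hprod : pairing (G.induce S) H * pairing (G.induce T) K =
      ∑ p ∈ (Bijections (G.induce S) H) ×ˢ (Bijections (G.induce T) K),
        pairingAt (G.induce S) H p.1 * pairingAt (G.induce T) K p.2 := by
    rw [pairing, pairing, Finset.sum_mul_sum, Finset.sum_product]
  rw [hprod, Finset.mul_sum]
  refine (Finset.sum_bij (fun p _ => glue hT hm p.1 p.2) ?_ ?_ ?_ ?_).symm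
  · intro p hp
    rw [Finset.mem_product] at hp
    rw [Finset.mem_filter]
    refine ⟨(hlab p.1 p.2).2 ⟨hp.1, hp.2⟩, ?_⟩
    rw [ha]
    exact posSet_glue_base hT hm p.1 p.2
  · intro p1 hp1 p2 hp2 heq
    have heq' : glue hT hm p1.1 p1.2 = glue hT hm p2.1 p2.2 := heq
    have hv : ∀ v : G.V, ((glue hT hm p1.1 p1.2) v : ℕ) = ((glue hT hm p2.1 p2.2) v : ℕ) :=
      fun v => by rw [heq']
    have e1 : p1.1 = p2.1 := by
      apply Equiv.ext
      rintro ⟨v, hvS⟩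
      apply Fin.ext
      have h := hv v
      rwa [glue_val_of_mem hT hm p1.1 p1.2 hvS, glue_val_of_mem hT hm p2.1 p2.2 hvS] at h
    have e2 : p1.2 = p2.2 := by
      apply Equiv.ext
      rintro ⟨v, hvT⟩
      apply Fin.ext
      have hvS : v ∉ S := (hT v).1 hvT
      have h := hv v
      rw [glue_val_of_not_mem hT hm p1.1 p1.2 hvS,
        glue_val_of_not_mem hT hm p2.1 p2.2 hvS] at h
      have he' : (⟨v, (hT v).2 hvS⟩ : {x : G.V // x ∈ T}) = ⟨v, hvT⟩ := rfl
      rw [he'] at h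
      omega
    exact Prod.ext_iff.2 ⟨e1, e2⟩
  · intro σ hσ
    rw [Finset.mem_filter] at hσ
    obtain ⟨hσb, hps⟩ := hσ
    have hSiff : ∀ v, v ∈ S ↔ (σ v : ℕ) < H.letters.length := by
      intro v
      rw [← hps]
      simp [posSet, ha]
    have hTiff : ∀ v, v ∈ T ↔ H.letters.length ≤ (σ v : ℕ) := by
      intro v; rw [hT v, hSiff v]; omega
    have hvlt : ∀ v, (σ v : ℕ) < H.letters.length + K.letters.length := by
      intro v; have h := (σ v).isLt; omega
    let τ₁ : {x : G.V // x ∈ S} ≃ Fin H.letters.length :=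
      { toFun := fun x => ⟨(σ x : ℕ), (hSiff x).1 x.2⟩
        invFun := fun k => ⟨σ.symm ⟨(k : ℕ), by have := k.isLt; omega⟩,
          (hSiff _).2 (by simpa using k.isLt)⟩
        left_inv := fun x => by
          apply Subtype.ext
          simp
        right_inv := fun k => by
          apply Fin.ext
          simp }
    let τ₂ : {x : G.V // x ∈ T} ≃ Fin K.letters.length :=
      { toFun := fun x => ⟨(σ x : ℕ) - H.letters.length,
          by have := (hTiff x).1 x.2; have := hvlt x; omega⟩
        invFun := fun k => ⟨σ.symm ⟨H.letters.length + (k : ℕ), by have := k.isLt; omega⟩,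
          (hTiff _).2 (by simp)⟩
        left_inv := fun x => by
          apply Subtype.ext
          have hax := (hTiff x).1 x.2
          have h1 : H.letters.length + ((σ x : ℕ) - H.letters.length) = (σ x : ℕ) := by omega
          simp only [h1, Fin.eta, Equiv.symm_apply_apply]
        right_inv := fun k => by
          apply Fin.ext
          simp }
    have hglue : glue hT hm τ₁ τ₂ = σ := by
      apply Equiv.ext
      intro v
      apply Fin.ext
      by_cases h : v ∈ S
      · rw [glue_val_of_mem hT hm τ₁ τ₂ h]; rfl
      · rw [glue_val_of_not_mem hT hm τ₁ τ₂ h]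
        have hge := (hTiff v).1 ((hT v).2 h)
        show H.letters.length + ((σ v : ℕ) - H.letters.length) = (σ v : ℕ)
        omega
    have hmem := (hlab τ₁ τ₂).1 (by rw [hglue]; exact hσb)
    exact ⟨(τ₁, τ₂), Finset.mem_product.2 ⟨hmem.1, hmem.2⟩, hglue⟩
  · intro p hp
    exact (hval p.1 p.2).symm

/-- If `S₀,T₀` partition the vertices, `S₀` is connected, and the only edge between them is `e`
with endpoint `w ∈ S₀` and other endpoint `z ∈ T₀`, then `S₀` is the side of `e` at `w`. -/
lemma posSet_eq_side {A : Type*} (G : LGraph A) (S₀ T₀ : Finset G.V) (e : G.V × G.V)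
    (w z : G.V) (hcompl : ∀ v, v ∈ T₀ ↔ v ∉ S₀) (hconn : G.ConnOn S₀)
    (hbet : G.between S₀ T₀ = {e}) (hw : w ∈ S₀) (hz : z ∈ T₀)
    (hwz : e = (w, z) ∨ e = (z, w)) :
    S₀ = G.side e w := by
  have hzS : z ∉ S₀ := (hcompl z).1 hz
  apply Finset.Subset.antisymm
  · intro v hv
    rw [G.mem_side]
    refine Relation.ReflTransGen.mono ?_ _ _ (hconn.2 w hw v hv)
    rintro u u' ⟨hu, hu', hor⟩
    rcases hor with h' | h'
    · refine Or.inl (Finset.mem_erase.2 ⟨?_, h'⟩)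
      intro heq
      rcases hwz with h'' | h''
      · rw [h''] at heq
        have hzz : u' = z := (Prod.ext_iff.1 heq).2
        rw [hzz] at hu'
        exact hzS hu'
      · rw [h''] at heq
        have hzz : u = z := (Prod.ext_iff.1 heq).1
        rw [hzz] at hu
        exact hzS hu
    · refine Or.inr (Finset.mem_erase.2 ⟨?_, h'⟩)
      intro heq
      rcases hwz with h'' | h''
      · rw [h''] at heq
        have hzz : u = z := (Prod.ext_iff.1 heq).2
        rw [hzz] at hu
        exact hzS hu
      · rw [h''] at heq
        have hzz : u' = z := (Prod.ext_iff.1 heq).1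
        rw [hzz] at hu'
        exact hzS hu'
  · intro v hv
    rw [G.mem_side] at hv
    have key : ∀ v, G.reach (G.edges.erase e) w v → v ∈ S₀ := by
      intro v h
      induction h with
      | refl => exact hw
      | tail hxc hcd ih =>
        rename_i c d
        by_contra hd
        have hdT : d ∈ T₀ := (hcompl d).2 hd
        rcases hcd with h' | h'
        · have hmemb : (c, d) ∈ G.between S₀ T₀ :=
            Finset.mem_filter.2 ⟨Finset.mem_of_mem_erase h', Or.inl ⟨ih, hdT⟩⟩
          rw [hbet, Finset.mem_singleton] at hmemb
          exact (Finset.mem_erase.1 h').1 hmemb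
        · have hmemb : (d, c) ∈ G.between S₀ T₀ :=
            Finset.mem_filter.2 ⟨Finset.mem_of_mem_erase h', Or.inr ⟨hdT, ih⟩⟩
          rw [hbet, Finset.mem_singleton] at hmemb
          exact (Finset.mem_erase.1 h').1 hmemb
    exact key v hv

end AuxLemmas

set_option maxHeartbeats 2000000 in
/-- **Bracketing Lie expressions is dual to cutting graphs**: if `G` is a finite directed
labeled graph in which every edge is separating (removing any edge `e` disconnects its two
endpoints' components, which together cover the whole graph — e.g. `G` a tree), then for Lie
bracket expressions `H`, `K` we have
`⟨G, [H,K]⟩ = Σ_e (⟨G₁ᵉ,H⟩·⟨G₂ᵉ,K⟩ − ⟨G₁ᵉ,K⟩·⟨G₂ᵉ,H⟩)`, the sum being over all edges of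
`G`, where `G₁ᵉ` and `G₂ᵉ` are the two subgraphs obtained by removing `e`, ordered so that
`e` pointed from `G₁ᵉ` to `G₂ᵉ` in `G`. -/
theorem pairing_br_eq_sum_cuts {A : Type*} (G : LGraph A)
    (hsep : ∀ e ∈ G.edges,
      ¬ G.reach (G.edges.erase e) e.1 e.2 ∧
      ∀ v : G.V, G.reach (G.edges.erase e) e.1 v ∨ G.reach (G.edges.erase e) e.2 v)
    (H K : LieExpr A) :
    pairing G (.br H K) =
      ∑ e ∈ G.edges,
        (pairing (G.induce (G.side e e.1)) H * pairing (G.induce (G.side e e.2)) K -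
          pairing (G.induce (G.side e e.1)) K * pairing (G.induce (G.side e e.2)) H) := by
  classical
  have hfact1 : ∀ e ∈ G.edges, ∀ v, v ∈ G.side e e.2 ↔ v ∉ G.side e e.1 := by
    intro e he v
    obtain ⟨hnr, hcov⟩ := hsep e he
    constructor
    · intro h2 h1
      exact hnr ((G.mem_side.1 h1).trans (G.reach_symm (G.mem_side.1 h2)))
    · intro h1
      rcases hcov v with h | h
      · exact absurd (G.mem_side.2 h) h1
      · exact G.mem_side.2 h
  have hmem1 : ∀ e : G.V × G.V, e.1 ∈ G.side e e.1 := fun e => G.mem_side.2 .refl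
  have hmem2 : ∀ e : G.V × G.V, e.2 ∈ G.side e e.2 := fun e => G.mem_side.2 .refl
  have hnot1 : ∀ e ∈ G.edges, e.2 ∉ G.side e e.1 :=
    fun e he h => (hsep e he).1 (G.mem_side.1 h)
  have hnot2 : ∀ e ∈ G.edges, e.1 ∉ G.side e e.2 :=
    fun e he h => (hsep e he).1 (G.reach_symm (G.mem_side.1 h))
  have hfact2 : ∀ e ∈ G.edges, ∀ f ∈ G.edges, f ≠ e →
      (f.1 ∈ G.side e e.1 ∧ f.2 ∈ G.side e e.1) ∨
        (f.1 ∈ G.side e e.2 ∧ f.2 ∈ G.side e e.2) := by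
    intro e he f hf hne
    obtain ⟨hnr, hcov⟩ := hsep e he
    have hstep : G.reach (G.edges.erase e) f.1 f.2 :=
      Relation.ReflTransGen.single (Or.inl (Finset.mem_erase.2 ⟨hne, hf⟩))
    rcases hcov f.1 with h | h
    · exact Or.inl ⟨G.mem_side.2 h, G.mem_side.2 (h.trans hstep)⟩
    · exact Or.inr ⟨G.mem_side.2 h, G.mem_side.2 (h.trans hstep)⟩
  have hcross : ∀ e ∈ G.edges, ∀ f ∈ G.edges,
      ¬((f.1 ∈ G.side e e.1) ↔ (f.2 ∈ G.side e e.1)) → f = e := by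
    intro e he f hf hiff
    by_contra hne
    rcases hfact2 e he f hf hne with ⟨h1, h2⟩ | ⟨h1, h2⟩
    · exact hiff (iff_of_true h1 h2)
    · exact hiff (iff_of_false ((hfact1 e he f.1).1 h1) ((hfact1 e he f.2).1 h2))
  have hgood_imp : ∀ σ ∈ Bijections G (LieExpr.br H K),
      pairingAt G (.br H K) σ ≠ 0 →
      ∃ e ∈ G.edges, posSet G σ 0 H.size = G.side e e.1 ∨
        posSet G σ 0 H.size = G.side e e.2 := by
    intro σ _ hne
    have hg : Good G (.br H K) σ := by
      by_contra hc
      rw [pairingAt, if_neg hc] at hne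
      exact hne rfl
    have hhead := hg ((0, H.size), (0 + H.size, K.size)) List.mem_cons_self
    obtain ⟨hcS, hcT, hcard⟩ := hhead
    have hcompl : ∀ v, v ∈ posSet G σ (0 + H.size) K.size ↔
        v ∉ posSet G σ 0 H.size := by
      intro v
      have hv : (σ v : ℕ) < H.size + K.size := by
        have h := (σ v).isLt
        have h2 : (LieExpr.br H K).letters.length = H.size + K.size := by
          rw [LieExpr.length_letters]; rfl
        omega
      simp only [posSet, Finset.mem_filter, Finset.mem_univ, true_and, zero_add]
      omega
    obtain ⟨e, he_eq⟩ := Finset.card_eq_one.1 hcard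
    have heB : e ∈ G.between (posSet G σ 0 H.size) (posSet G σ (0 + H.size) K.size) := by
      rw [he_eq]; exact Finset.mem_singleton_self e
    obtain ⟨heE, hsplit⟩ := Finset.mem_filter.1 heB
    rcases hsplit with ⟨h1, h2⟩ | ⟨h1, h2⟩
    · exact ⟨e, heE, Or.inl (posSet_eq_side G _ _ e e.1 e.2 hcompl hcS he_eq h1 h2
        (Or.inl rfl))⟩
    · exact ⟨e, heE, Or.inr (posSet_eq_side G _ _ e e.2 e.1 hcompl hcS he_eq h2 h1
        (Or.inr rfl))⟩
  have hdisj : (G.edges : Set (G.V × G.V)).PairwiseDisjoint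
      (fun e => (Bijections G (LieExpr.br H K)).filter
        (fun σ => posSet G σ 0 H.size = G.side e e.1 ∨
          posSet G σ 0 H.size = G.side e e.2)) := by
    intro e he e' he' hne
    rw [Function.onFun, Finset.disjoint_left]
    intro σ hσ hσ'
    rw [Finset.mem_filter] at hσ hσ'
    have hA := hσ.2
    have hB := hσ'.2
    have he2 : e ∈ G.edges := he
    have he2' : e' ∈ G.edges := he'
    have h1 : (e'.1 ∈ posSet G σ 0 H.size ∧ e'.2 ∉ posSet G σ 0 H.size) ∨
        (e'.2 ∈ posSet G σ 0 H.size ∧ e'.1 ∉ posSet G σ 0 H.size) := by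
      rcases hB with h | h
      · exact Or.inl ⟨by rw [h]; exact hmem1 e', by rw [h]; exact hnot1 e' he2'⟩
      · exact Or.inr ⟨by rw [h]; exact hmem2 e', by rw [h]; exact hnot2 e' he2'⟩
    have hiff : ¬((e'.1 ∈ G.side e e.1) ↔ (e'.2 ∈ G.side e e.1)) := by
      rcases hA with h | h
      · rw [h] at h1
        rcases h1 with ⟨ha1, ha2⟩ | ⟨ha1, ha2⟩
        · intro hif; exact ha2 (hif.1 ha1)
        · intro hif; exact ha2 (hif.2 ha1)
      · rw [h] at h1
        rcases h1 with ⟨ha1, ha2⟩ | ⟨ha1, ha2⟩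
        · have hb1 : e'.1 ∉ G.side e e.1 := (hfact1 e he2 e'.1).1 ha1
          have hb2 : e'.2 ∈ G.side e e.1 := by
            by_contra hc
            exact ha2 ((hfact1 e he2 e'.2).2 hc)
          intro hif; exact hb1 (hif.2 hb2)
        · have hb1 : e'.2 ∉ G.side e e.1 := (hfact1 e he2 e'.2).1 ha1
          have hb2 : e'.1 ∈ G.side e e.1 := by
            by_contra hc
            exact ha2 ((hfact1 e he2 e'.1).2 hc)
          intro hif; exact hb1 (hif.1 hb2)
    exact hne (hcross e he2 e' he2' hiff).symm
  rw [pairing]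
  rw [← Finset.sum_filter_of_ne hgood_imp]
  have hsplitB : (Bijections G (LieExpr.br H K)).filter (fun σ => ∃ e ∈ G.edges,
        posSet G σ 0 H.size = G.side e e.1 ∨ posSet G σ 0 H.size = G.side e e.2) =
      G.edges.biUnion (fun e => (Bijections G (LieExpr.br H K)).filter
        (fun σ => posSet G σ 0 H.size = G.side e e.1 ∨
          posSet G σ 0 H.size = G.side e e.2)) := by
    ext σ
    simp only [Finset.mem_filter, Finset.mem_biUnion]
    constructor
    · rintro ⟨hb, e, he, h⟩; exact ⟨e, he, hb, h⟩
    · rintro ⟨e, he, hb, h⟩; exact ⟨hb, e, he, h⟩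
  rw [hsplitB, Finset.sum_biUnion hdisj]
  apply Finset.sum_congr rfl
  intro e he
  have hT1 := hfact1 e he
  have hT1' : ∀ v, v ∈ G.side e e.1 ↔ v ∉ G.side e e.2 := by
    intro v
    constructor
    · intro h hc; exact (hT1 v).1 hc h
    · intro h; by_contra hc; exact h ((hT1 v).2 hc)
  rw [Finset.filter_or, Finset.sum_union (by
    rw [Finset.disjoint_left]
    intro σ hσ hσ'
    rw [Finset.mem_filter] at hσ hσ'
    have h12 : G.side e e.1 = G.side e e.2 := hσ.2.symm.trans hσ'.2
    exact (hnot1 e he) (h12 ▸ hmem2 e))]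
  rw [sum_filter_posSet_eq G H K (G.side e e.1) (G.side e e.2) e hT1 he
      (Or.inl ⟨hmem1 e, hmem2 e⟩) (hfact2 e he) (G.side_conn e e.1) (G.side_conn e e.2),
    sum_filter_posSet_eq G H K (G.side e e.2) (G.side e e.1) e hT1' he
      (Or.inr ⟨hmem1 e, hmem2 e⟩) (fun f hf hne => (hfact2 e he f hf hne).symm)
      (G.side_conn e e.2) (G.side_conn e e.1)]
  rw [if_pos (hmem1 e), if_neg (hnot2 e he)]
  ring
end
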